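/- arXiv:2509.25901 — 8 statements merged into one kernel-verified Lean document; each statement's English description precedes it below -/
import Mathlib

section
/- Let q > 3 be a power of 2 and L = PSL(2,q). Let X be the set of involutions of L, and let C(L,X) be the graph on X where distinct x,y are adjacent iff xy = yx. Then C(L,X) has q+1 connected components, each of which is a complete graph on q-1 vertices. -/
open Matrix
open scoped MatrixGroups

/-- The commuting involution graph of a group, on the set of all involutions. -/
def commGraph (G : Type*) [Group G] : SimpleGraph {x : G // x * x = 1 ∧ x ≠ 1} where
  Adj x y := x ≠ y ∧ (x : G) * y = (y : G) * x
  symm := ⟨fun x y h => ⟨h.1.symm, h.2.symm⟩⟩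
  loopless := ⟨fun x h => h.1 rfl⟩

namespace CIGAux

theorem abstract {G : Type*} [Group G] {I J : Type*} (j₀ : J)
    (f : I × J ≃ {x : G // x * x = 1 ∧ x ≠ 1})
    (hf : ∀ p q : I × J, ((f p : G) * (f q : G) = (f q : G) * (f p : G)) ↔ p.1 = q.1) :
    Nat.card (commGraph G).ConnectedComponent = Nat.card I ∧
    (∀ c : (commGraph G).ConnectedComponent, Nat.card c.supp = Nat.card J) ∧
    (∀ x y, (commGraph G).Reachable x y → x ≠ y → (commGraph G).Adj x y) := by
  classical
  let κ : {x : G // x * x = 1 ∧ x ≠ 1} → I := fun x => (f.symm x).1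
  have hcomm : ∀ x y : {x : G // x * x = 1 ∧ x ≠ 1}, ((x : G) * y = (y : G) * x) ↔ κ x = κ y := by
    intro x y
    have := hf (f.symm x) (f.symm y)
    simpa using this
  have hreach : ∀ x y, (commGraph G).Reachable x y ↔ κ x = κ y := by
    intro x y
    constructor
    · intro h
      obtain ⟨w⟩ := h
      induction w with
      | nil => rfl
      | cons h' p ih => exact ((hcomm _ _).1 h'.2).trans ih
    · intro h
      rcases eq_or_ne x y with rfl | hxy
      · exact SimpleGraph.Reachable.refl x
      · exact SimpleGraph.Adj.reachable ⟨hxy, (hcomm x y).2 h⟩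
  have hκf : ∀ (i : I) (j : J), κ (f (i, j)) = i := fun i j => by simp [κ]
  refine ⟨?_, ?_, fun x y h hne => ⟨hne, (hcomm x y).2 ((hreach x y).1 h)⟩⟩
  · have e : (commGraph G).ConnectedComponent ≃ I :=
      { toFun := Quot.lift κ (fun a b h => (hreach a b).1 h)
        invFun := fun i => (commGraph G).connectedComponentMk (f (i, j₀))
        left_inv := by
          apply SimpleGraph.ConnectedComponent.ind
          intro v
          exact SimpleGraph.ConnectedComponent.sound ((hreach _ _).2 (hκf _ _))
        right_inv := fun i => hκf i j₀ }
    exact Nat.card_congr e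
  · intro c
    induction c using SimpleGraph.ConnectedComponent.ind with
    | _ v =>
      have e : J ≃ ((commGraph G).connectedComponentMk v).supp :=
        { toFun := fun j => ⟨f (κ v, j), by
            rw [SimpleGraph.ConnectedComponent.mem_supp_iff]
            exact SimpleGraph.ConnectedComponent.sound ((hreach _ _).2 (hκf _ _))⟩
          invFun := fun y => (f.symm (y : {x : G // x * x = 1 ∧ x ≠ 1})).2
          left_inv := fun j => by simp
          right_inv := fun y => by
            have hy := (SimpleGraph.ConnectedComponent.mem_supp_iff _ _).1 y.2
            have hk : κ (y : {x : G // x * x = 1 ∧ x ≠ 1}) = κ v :=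
              (hreach _ _).1 (SimpleGraph.ConnectedComponent.exact hy)
            apply Subtype.ext
            show f (κ v, (f.symm (y : {x : G // x * x = 1 ∧ x ≠ 1})).2) = (y : {x : G // x * x = 1 ∧ x ≠ 1})
            conv_rhs => rw [← f.apply_symm_apply (y : {x : G // x * x = 1 ∧ x ≠ 1})]
            congr 1
            exact Prod.ext hk.symm rfl }
      exact Nat.card_congr e.symm

end CIGAux

namespace CIGAux

/-- Transfer involutions along a group isomorphism. -/
def involEquiv {G H : Type*} [Group G] [Group H] (e : G ≃* H) :
    {x : G // x * x = 1 ∧ x ≠ 1} ≃ {x : H // x * x = 1 ∧ x ≠ 1} :=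
  e.toEquiv.subtypeEquiv fun a => by
    rw [show e.toEquiv a = e a from rfl, ← _root_.map_mul]
    constructor
    · rintro ⟨h1, h2⟩
      exact ⟨by rw [h1, _root_.map_one], by simpa using fun h => h2 (e.injective (by simpa using h))⟩
    · rintro ⟨h1, h2⟩
      refine ⟨e.injective (by simpa using h1), fun h => h2 (by rw [h, _root_.map_one])⟩

@[simp] lemma involEquiv_coe {G H : Type*} [Group G] [Group H] (e : G ≃* H)
    (x : {x : G // x * x = 1 ∧ x ≠ 1}) : ((involEquiv e x : H)) = e (x : G) := rfl

variable {F : Type} [Field F]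

lemma sqInj (h2 : (2 : F) = 0) {x y : F} (h : x * x = y * y) : x = y := by
  have h3 : (x - y) * (x - y) = 0 := by linear_combination h + (y * y - x * y) * h2
  exact sub_eq_zero.mp (mul_self_eq_zero.mp h3)

/-- entry facts for an involution in SL(2,F), char 2 -/
lemma entryFacts (h2 : (2 : F) = 0) (A : SL(2, F)) (hA : A * A = 1) :
    A.1 1 1 = A.1 0 0 ∧ A.1 0 1 * A.1 1 0 = (A.1 0 0 + 1) * (A.1 0 0 + 1) := by
  have hm : A.1 * A.1 = 1 := by
    have := congrArg Subtype.val hA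
    simpa using this
  have h00 := congrFun (congrFun hm 0) 0
  have h11 := congrFun (congrFun hm 1) 1
  simp [Matrix.mul_apply, Fin.sum_univ_two, Matrix.one_apply] at h00 h11
  have hdet : A.1 0 0 * A.1 1 1 - A.1 0 1 * A.1 1 0 = 1 := by
    rw [← Matrix.det_fin_two]; exact A.2
  have hd : A.1 1 1 = A.1 0 0 := sqInj h2 (by linear_combination h11 - h00)
  exact ⟨hd, by linear_combination (-1) * hdet + A.1 0 0 * hd - (A.1 0 0 + 1) * h2⟩

lemma caseC0 (h2 : (2 : F) = 0) (A : SL(2, F)) (hA : A * A = 1) (hA1 : A ≠ 1)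
    (hc : A.1 1 0 = 0) : A.1 0 0 = 1 ∧ A.1 0 1 ≠ 0 := by
  obtain ⟨hd, hbc⟩ := entryFacts h2 A hA
  have ha : A.1 0 0 = 1 := by
    have : (A.1 0 0 + 1) * (A.1 0 0 + 1) = 0 := by rw [← hbc, hc, mul_zero]
    have h4 := mul_self_eq_zero.mp this
    linear_combination h4 - h2
  refine ⟨ha, fun hb => hA1 ?_⟩
  apply Subtype.ext
  show A.1 = 1
  ext i j
  fin_cases i <;> fin_cases j <;>
    simp [ha, hb, hc, hd, Matrix.one_apply]

end CIGAux
namespace CIGAux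

variable {F : Type} [Field F]

def toFunSL (h2 : (2 : F) = 0) :
    Option F × {c : F // c ≠ 0} → {x : SL(2, F) // x * x = 1 ∧ x ≠ 1}
  | (none, b) =>
    ⟨⟨!![1, b.1; 0, 1], by simp [Matrix.det_fin_two_of]⟩, by
      apply Subtype.ext
      show (!![1, b.1; 0, 1] : Matrix (Fin 2) (Fin 2) F) * !![1, b.1; 0, 1] = 1
      rw [Matrix.mul_fin_two]
      ext i j
      fin_cases i <;> fin_cases j <;> simp [Matrix.one_apply] <;> linear_combination b.1 * h2, by
      intro h
      have := congrArg (fun m => m.1 0 1) h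
      simp at this
      exact b.2 this⟩
  | (some s, c) =>
    ⟨⟨!![s * c.1 + 1, s ^ 2 * c.1; c.1, s * c.1 + 1], by
        rw [Matrix.det_fin_two_of]; linear_combination (s * c.1) * h2⟩, by
      apply Subtype.ext
      show (!![s * c.1 + 1, s ^ 2 * c.1; c.1, s * c.1 + 1] : Matrix (Fin 2) (Fin 2) F) * _ = 1
      rw [Matrix.mul_fin_two]
      ext i j
      fin_cases i <;> fin_cases j <;> simp [Matrix.one_apply]
      · linear_combination (s ^ 2 * c.1 ^ 2 + s * c.1) * h2
      · linear_combination (s ^ 3 * c.1 ^ 2 + s ^ 2 * c.1) * h2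
      · linear_combination (s * c.1 ^ 2 + c.1) * h2
      · linear_combination (s ^ 2 * c.1 ^ 2 + s * c.1) * h2, by
      intro h
      have := congrArg (fun m => m.1 1 0) h
      simp at this
      exact c.2 this⟩

open scoped Classical in
noncomputable def invFunSL (h2 : (2 : F) = 0) (x : {x : SL(2, F) // x * x = 1 ∧ x ≠ 1}) :
    Option F × {c : F // c ≠ 0} :=
  if h : x.1.1 1 0 = 0 then (none, ⟨x.1.1 0 1, (caseC0 h2 x.1 x.2.1 x.2.2 h).2⟩)
  else (some ((x.1.1 0 0 + 1) / x.1.1 1 0), ⟨x.1.1 1 0, h⟩)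

end CIGAux
namespace CIGAux

variable {F : Type} [Field F]

noncomputable def equivSL (h2 : (2 : F) = 0) :
    Option F × {c : F // c ≠ 0} ≃ {x : SL(2, F) // x * x = 1 ∧ x ≠ 1} where
  toFun := toFunSL h2
  invFun := invFunSL h2
  left_inv := by
    rintro ⟨s | s, c⟩
    · rw [invFunSL, dif_pos (show (toFunSL h2 (none, c)).1.1 1 0 = 0 by simp [toFunSL])]
      simp [toFunSL]
    · rw [invFunSL, dif_neg (show ¬(toFunSL h2 (some s, c)).1.1 1 0 = 0 by simp [toFunSL]; exact c.2)]
      refine Prod.ext ?_ (by simp [toFunSL])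
      show some _ = some s
      congr 1
      show ((toFunSL h2 (some s, c)).1.1 0 0 + 1) / (toFunSL h2 (some s, c)).1.1 1 0 = s
      simp only [toFunSL]
      rw [show (!![s * c.1 + 1, s ^ 2 * c.1; c.1, s * c.1 + 1] : Matrix (Fin 2) (Fin 2) F) 0 0
          = s * c.1 + 1 by simp,
        show (!![s * c.1 + 1, s ^ 2 * c.1; c.1, s * c.1 + 1] : Matrix (Fin 2) (Fin 2) F) 1 0
          = c.1 by simp, div_eq_iff c.2]
      linear_combination h2
  right_inv := by
    intro x
    by_cases hc : x.1.1 1 0 = 0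
    · obtain ⟨ha, hb⟩ := caseC0 h2 x.1 x.2.1 x.2.2 hc
      obtain ⟨hd, -⟩ := entryFacts h2 x.1 x.2.1
      rw [invFunSL, dif_pos hc]
      apply Subtype.ext
      apply Subtype.ext
      show (!![1, x.1.1 0 1; 0, 1] : Matrix (Fin 2) (Fin 2) F) = x.1.1
      ext i j
      fin_cases i <;> fin_cases j <;> simp [ha, hc, hd]
    · obtain ⟨hd, hbc⟩ := entryFacts h2 x.1 x.2.1
      rw [invFunSL, dif_neg hc]
      apply Subtype.ext
      apply Subtype.ext
      set a := x.1.1 0 0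
      set c := x.1.1 1 0
      show (!![(a + 1) / c * c + 1, ((a + 1) / c) ^ 2 * c; c, (a + 1) / c * c + 1] :
        Matrix (Fin 2) (Fin 2) F) = x.1.1
      rw [div_mul_cancel₀ _ hc]
      ext i j
      fin_cases i <;> fin_cases j
      · show a + 1 + 1 = a
        linear_combination h2
      · show ((a + 1) / c) ^ 2 * c = x.1.1 0 1
        rw [div_pow, div_mul_eq_mul_div, div_eq_iff (pow_ne_zero 2 hc)]
        linear_combination (-c) * hbc
      · rfl
      · show a + 1 + 1 = x.1.1 1 1
        rw [hd]
        linear_combination h2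

lemma hfSL (h2 : (2 : F) = 0) (p q : Option F × {c : F // c ≠ 0}) :
    ((toFunSL h2 p : SL(2, F)) * (toFunSL h2 q : SL(2, F))
      = (toFunSL h2 q : SL(2, F)) * (toFunSL h2 p : SL(2, F))) ↔ p.1 = q.1 := by
  obtain ⟨s | s, b⟩ := p <;> obtain ⟨t | t, c⟩ := q
  · refine iff_of_true ?_ rfl
    apply Subtype.ext
    show (!![1, b.1; 0, 1] : Matrix (Fin 2) (Fin 2) F) * !![1, c.1; 0, 1]
      = !![1, c.1; 0, 1] * !![1, b.1; 0, 1]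
    rw [Matrix.mul_fin_two, Matrix.mul_fin_two]
    ext i j
    fin_cases i <;> fin_cases j <;> simp <;> ring
  · refine iff_of_false (fun h => ?_) (by simp)
    have hm := congrArg (fun A : SL(2, F) => A.1 0 0) h
    simp only [Matrix.SpecialLinearGroup.coe_mul] at hm
    simp [toFunSL, Matrix.mul_apply, Fin.sum_univ_two] at hm
    rcases hm with hm | hm
    · first | exact b.2 hm | exact c.2 hm
    · first | exact b.2 hm | exact c.2 hm
  · refine iff_of_false (fun h => ?_) (by simp)
    have hm := congrArg (fun A : SL(2, F) => A.1 0 0) h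
    simp only [Matrix.SpecialLinearGroup.coe_mul] at hm
    simp [toFunSL, Matrix.mul_apply, Fin.sum_univ_two] at hm
    rcases hm with hm | hm
    · first | exact b.2 hm | exact c.2 hm
    · first | exact b.2 hm | exact c.2 hm
  · constructor
    · intro h
      have hm := congrArg (fun A : SL(2, F) => A.1 0 0) h
      simp only [Matrix.SpecialLinearGroup.coe_mul] at hm
      simp [toFunSL, Matrix.mul_apply, Fin.sum_univ_two] at hm
      have hss : s * s = t * t := by
        apply mul_right_cancel₀ (mul_ne_zero b.2 c.2)
        linear_combination hm
      exact congrArg some (sqInj h2 hss)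
    · intro h
      simp only [Option.some.injEq] at h
      subst h
      apply Subtype.ext
      show (!![s * b.1 + 1, s ^ 2 * b.1; b.1, s * b.1 + 1] : Matrix (Fin 2) (Fin 2) F)
          * !![s * c.1 + 1, s ^ 2 * c.1; c.1, s * c.1 + 1]
        = !![s * c.1 + 1, s ^ 2 * c.1; c.1, s * c.1 + 1]
          * !![s * b.1 + 1, s ^ 2 * b.1; b.1, s * b.1 + 1]
      rw [Matrix.mul_fin_two, Matrix.mul_fin_two]
      ext i j
      fin_cases i <;> fin_cases j <;> simp <;> ring

end CIGAux
namespace CIGAux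

lemma charTwo {q : ℕ} (hq2 : ∃ n : ℕ, q = 2 ^ n)
    (F : Type) [Field F] [Fintype F] (hF : Fintype.card F = q) : (2 : F) = 0 := by
  obtain ⟨n, rfl⟩ := hq2
  set p := ringChar F with hp
  haveI : CharP F p := ringChar.charP F
  obtain ⟨m, hprime, hcard⟩ := FiniteField.card F p
  have hdvd : p ∣ 2 ^ n := by
    rw [← hF, hcard]
    exact dvd_pow_self p m.2.ne'
  have hp2 : p = 2 := by
    have := hprime.dvd_of_dvd_pow hdvd
    exact (Nat.prime_dvd_prime_iff_eq hprime Nat.prime_two).mp this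
  have := CharP.cast_eq_zero F p
  rw [hp2] at this
  exact_mod_cast this

lemma centerBot {F : Type} [Field F] (h2 : (2 : F) = 0) :
    Subgroup.center (SL(2, F)) = ⊥ := by
  rw [eq_bot_iff]
  intro A hA
  obtain ⟨r, hr1, hr2⟩ := Matrix.SpecialLinearGroup.mem_center_iff.mp hA
  rw [Fintype.card_fin] at hr1
  have hr : r = 1 := by
    have h3 : (r - 1) * (r - 1) = 0 := by linear_combination hr1 + (1 - r) * h2
    exact sub_eq_zero.mp (mul_self_eq_zero.mp h3)
  rw [Subgroup.mem_bot]
  apply Subtype.ext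
  rw [← hr2, hr]
  simp

end CIGAux

/-- For `q > 3` a power of `2` and `L = PSL(2,q)`, the commuting involution graph of `L`
has `q + 1` connected components, each of which is a complete graph on `q - 1` vertices. -/
theorem stmt_0 (q : ℕ) (hq2 : ∃ n : ℕ, q = 2 ^ n) (hq3 : 3 < q)
    (F : Type) [Field F] [Fintype F] (hF : Fintype.card F = q) :
    Nat.card (commGraph (PSL(2, F))).ConnectedComponent = q + 1 ∧
    (∀ c : (commGraph (PSL(2, F))).ConnectedComponent, Nat.card c.supp = q - 1) ∧
    (∀ x y : {x : PSL(2, F) // x * x = 1 ∧ x ≠ 1},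
      (commGraph (PSL(2, F))).Reachable x y → x ≠ y → (commGraph (PSL(2, F))).Adj x y) := by
  classical
  have h2 : (2 : F) = 0 := CIGAux.charTwo hq2 F hF
  let e : SL(2, F) ≃* PSL(2, F) :=
    ((QuotientGroup.quotientMulEquivOfEq (CIGAux.centerBot h2)).trans
      QuotientGroup.quotientBot).symm
  let f : Option F × {c : F // c ≠ 0} ≃ {x : PSL(2, F) // x * x = 1 ∧ x ≠ 1} :=
    (CIGAux.equivSL h2).trans (CIGAux.involEquiv e)
  have hf : ∀ p q : Option F × {c : F // c ≠ 0},
      ((f p : PSL(2, F)) * (f q : PSL(2, F)) = (f q : PSL(2, F)) * (f p : PSL(2, F)))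
        ↔ p.1 = q.1 := by
    intro p q
    rw [← CIGAux.hfSL h2 p q]
    show (e _ * e _ = e _ * e _) ↔ _
    rw [← _root_.map_mul, ← _root_.map_mul, e.injective.eq_iff]
    exact Iff.rfl
  obtain ⟨H1, H2, H3⟩ := CIGAux.abstract (⟨1, one_ne_zero⟩ : {c : F // c ≠ 0}) f hf
  refine ⟨?_, fun c => ?_, H3⟩
  · rw [H1, Nat.card_eq_fintype_card, Fintype.card_option, hF]
  · rw [H2 c, Nat.card_eq_fintype_card]
    have : Fintype.card {c : F // c ≠ 0} = Fintype.card F - Fintype.card {c : F // c = 0} :=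
      Fintype.card_subtype_compl _
    rw [this, Fintype.card_subtype_eq (0 : F), hF]
end

section
/- Let q > 3 be a power of 2 and L = PSL(2,q), X its class of involutions. Then the automorphism group of the commuting involution graph C(L,X) is isomorphic to the wreath product Sym(q-1) wr Sym(q+1). -/
open Matrix
open scoped MatrixGroups

def graphAut {V : Type*} (G : SimpleGraph V) : Subgroup (Equiv.Perm V) where
  carrier := {e | ∀ x y, G.Adj (e x) (e y) ↔ G.Adj x y}
  one_mem' := by intro x y; simp
  mul_mem' := by
    intro a b ha hb x y
    simp only [Equiv.Perm.mul_apply]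
    exact (ha _ _).trans (hb x y)
  inv_mem' := by
    intro a ha x y
    simpa using (ha (a⁻¹ x) (a⁻¹ y)).symm

def reindexAut (a b : ℕ) : Equiv.Perm (Fin b) →* MulAut (Fin b → Equiv.Perm (Fin a)) where
  toFun σ :=
    { toFun := fun f => f ∘ σ.symm
      invFun := fun f => f ∘ σ
      left_inv := fun f => by ext i : 1; simp
      right_inv := fun f => by ext i : 1; simp
      map_mul' := fun f g => rfl }
  map_one' := rfl
  map_mul' := fun σ τ => rfl

def WreathSym (a b : ℕ) : Type :=
  (Fin b → Equiv.Perm (Fin a)) ⋊[reindexAut a b] Equiv.Perm (Fin b)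

instance (a b : ℕ) : Group (WreathSym a b) :=
  inferInstanceAs (Group ((Fin b → Equiv.Perm (Fin a)) ⋊[reindexAut a b] Equiv.Perm (Fin b)))

/-! ### Generic graph lemmas -/

lemma commGraph_adj {G : Type*} [Group G] (x y : {x : G // x * x = 1 ∧ x ≠ 1}) :
    (commGraph G).Adj x y ↔ x ≠ y ∧ (x : G) * y = (y : G) * x := Iff.rfl

lemma mem_graphAut_iff {V : Type*} (G : SimpleGraph V) (e : Equiv.Perm V) :
    e ∈ graphAut G ↔ ∀ x y, G.Adj (e x) (e y) ↔ G.Adj x y := Iff.rfl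

/-- Conjugating by a graph isomorphism gives an isomorphism of automorphism groups. -/
def graphAutCongr {V W : Type*} {G : SimpleGraph V} {H : SimpleGraph W} (e : G ≃g H) :
    graphAut G ≃* graphAut H where
  toFun a := ⟨e.toEquiv.symm.trans ((a : Equiv.Perm V).trans e.toEquiv), by
    intro x y
    have h1 : H.Adj (e ((a : Equiv.Perm V) (e.symm x))) (e ((a : Equiv.Perm V) (e.symm y))) ↔
        G.Adj ((a : Equiv.Perm V) (e.symm x)) ((a : Equiv.Perm V) (e.symm y)) := e.map_adj_iff
    exact h1.trans ((a.2 _ _).trans e.symm.map_adj_iff)⟩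
  invFun a := ⟨e.toEquiv.trans ((a : Equiv.Perm W).trans e.toEquiv.symm), by
    intro x y
    have h1 : G.Adj (e.symm ((a : Equiv.Perm W) (e x))) (e.symm ((a : Equiv.Perm W) (e y))) ↔
        H.Adj ((a : Equiv.Perm W) (e x)) ((a : Equiv.Perm W) (e y)) := e.symm.map_adj_iff
    exact h1.trans ((a.2 _ _).trans e.map_adj_iff)⟩
  left_inv a := by
    apply Subtype.ext
    apply Equiv.ext
    intro x
    show e.toEquiv.symm (e.toEquiv ((a : Equiv.Perm V) (e.toEquiv.symm (e.toEquiv x)))) = _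
    rw [Equiv.symm_apply_apply, Equiv.symm_apply_apply]
  right_inv a := by
    apply Subtype.ext
    apply Equiv.ext
    intro x
    show e.toEquiv (e.toEquiv.symm ((a : Equiv.Perm W) (e.toEquiv (e.toEquiv.symm x)))) = _
    rw [Equiv.apply_symm_apply, Equiv.apply_symm_apply]
  map_mul' a b := by
    apply Subtype.ext
    apply Equiv.ext
    intro x
    show e.toEquiv ((a : Equiv.Perm V) ((b : Equiv.Perm V) (e.toEquiv.symm x))) =
      e.toEquiv ((a : Equiv.Perm V) (e.toEquiv.symm (e.toEquiv ((b : Equiv.Perm V) (e.toEquiv.symm x)))))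
    rw [Equiv.symm_apply_apply]

/-- A group isomorphism induces an isomorphism of commuting involution graphs. -/
def commGraphCongr {G H : Type*} [Group G] [Group H] (e : G ≃* H) :
    commGraph G ≃g commGraph H where
  toEquiv := Equiv.subtypeEquiv e.toEquiv (fun x => by
    constructor
    · rintro ⟨h1, h2⟩
      refine ⟨?_, fun h => h2 (e.injective (h.trans (_root_.map_one e).symm))⟩
      show e x * e x = 1
      rw [← _root_.map_mul, h1, _root_.map_one]
    · rintro ⟨h1, h2⟩
      refine ⟨e.injective ?_, fun h => h2 (by rw [h]; exact _root_.map_one e)⟩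
      rw [_root_.map_mul, _root_.map_one]
      exact h1)
  map_rel_iff' := by
    intro x y
    change (_ ≠ _ ∧ e ↑x * e ↑y = e ↑y * e ↑x) ↔ (_ ≠ _ ∧ (x : G) * y = (y : G) * x)
    apply and_congr
    · exact not_congr (Equiv.apply_eq_iff_eq _)
    · rw [← _root_.map_mul, ← _root_.map_mul]
      exact e.injective.eq_iff

/-- The disjoint union of cliques indexed by `I`, each with vertex set `P`. -/
def pGraph (I P : Type*) : SimpleGraph (I × P) where
  Adj x y := x ≠ y ∧ x.1 = y.1
  symm := ⟨fun x y h => ⟨h.1.symm, h.2.symm⟩⟩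
  loopless := ⟨fun x h => h.1 rfl⟩

lemma pGraph_adj {I P : Type*} (x y : I × P) :
    (pGraph I P).Adj x y ↔ x ≠ y ∧ x.1 = y.1 := Iff.rfl

/-! ### The wreath product as automorphism group of a clique union -/

section Wreath

variable {a b : ℕ}

def wPerm (w : WreathSym a b) : Equiv.Perm (Fin b × Fin a) where
  toFun x := (w.right x.1, w.left (w.right x.1) x.2)
  invFun x := (w.right⁻¹ x.1, (w.left x.1)⁻¹ x.2)
  left_inv x := by simp
  right_inv x := by simp

lemma wmul_left (v w : WreathSym a b) :
    (v * w).left = v.left * (reindexAut a b) v.right w.left := rfl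

lemma wmul_right (v w : WreathSym a b) : (v * w).right = v.right * w.right := rfl

lemma wPerm_mul (v w : WreathSym a b) : wPerm (v * w) = wPerm v * wPerm w := by
  apply Equiv.ext
  intro x
  apply Prod.ext
  · rfl
  · show ((v.left * (reindexAut a b) v.right w.left) ((v.right * w.right) x.1)) x.2 =
      v.left (v.right (w.right x.1)) (w.left (w.right x.1) x.2)
    simp only [Pi.mul_apply, Equiv.Perm.mul_apply]
    show v.left _ (w.left (v.right.symm (v.right (w.right x.1))) x.2) = _
    rw [Equiv.symm_apply_apply]

def wHom : WreathSym a b →* graphAut (pGraph (Fin b) (Fin a)) where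
  toFun w := ⟨wPerm w, by
    intro x y
    simp only [pGraph_adj]
    constructor
    · rintro ⟨h1, h2⟩
      exact ⟨fun h => h1 (congrArg _ h), w.right.injective h2⟩
    · rintro ⟨h1, h2⟩
      exact ⟨fun h => h1 ((wPerm w).injective h), congrArg w.right h2⟩⟩
  map_one' := by
    apply Subtype.ext
    apply Equiv.ext
    intro x
    exact Prod.ext rfl rfl
  map_mul' v w := by
    apply Subtype.ext
    exact wPerm_mul v w

lemma wHom_injective (ha : 0 < a) : Function.Injective (wHom : WreathSym a b →* _) := by
  rw [injective_iff_map_eq_one]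
  intro w hw
  have hperm : wPerm w = 1 := Subtype.ext_iff.mp hw
  have key : ∀ x : Fin b × Fin a, (w.right x.1, w.left (w.right x.1) x.2) = x := by
    intro x
    have := congrArg (fun (e : Equiv.Perm (Fin b × Fin a)) => e x) hperm
    simpa [wPerm] using this
  set p0 : Fin a := ⟨0, ha⟩
  have hright : w.right = 1 := Equiv.ext fun i =>
    (congrArg Prod.fst (key (i, p0)) : _)
  have hleft : w.left = 1 := by
    funext i
    apply Equiv.ext
    intro p
    have h := congrArg Prod.snd (key (i, p))
    have h2 : w.left (w.right i) p = p := h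
    rw [hright] at h2
    exact h2
  exact SemidirectProduct.ext hleft hright
  -- `SemidirectProduct.ext : left = left → right = right → a = b`

lemma wHom_surjective (ha : 0 < a) : Function.Surjective (wHom : WreathSym a b →* _) := by
  rintro ⟨e, he⟩
  set p0 : Fin a := ⟨0, ha⟩ with hp0
  have epart : ∀ (f : Equiv.Perm (Fin b × Fin a)), f ∈ graphAut (pGraph (Fin b) (Fin a)) →
      ∀ x y : Fin b × Fin a, x.1 = y.1 → (f x).1 = (f y).1 := by
    intro f hf x y hxy
    by_cases hxy' : x = y
    · rw [hxy']
    · exact (((hf x y).mpr ⟨hxy', hxy⟩).2 : (f x).1 = (f y).1)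
  have he' : e⁻¹ ∈ graphAut (pGraph (Fin b) (Fin a)) := (graphAut _).inv_mem he
  have σinj : Function.Injective (fun i => (e (i, p0)).1) := by
    intro i j hij
    by_cases h : e (i, p0) = e (j, p0)
    · exact congrArg Prod.fst (e.injective h)
    · have : ((e⁻¹) (e (i, p0))).1 = ((e⁻¹) (e (j, p0))).1 := epart _ he' _ _ hij
      simpa using this
  let σ : Equiv.Perm (Fin b) :=
    Equiv.ofBijective _ (Finite.injective_iff_bijective.mp σinj)
  have σ_apply : ∀ i, σ i = (e (i, p0)).1 := fun i => rfl
  have finj : ∀ i : Fin b, Function.Injective (fun p => (e (σ.symm i, p)).2) := by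
    intro i p p' hpp
    have h1 : (e (σ.symm i, p)).1 = (e (σ.symm i, p')).1 := epart _ he _ _ rfl
    have : e (σ.symm i, p) = e (σ.symm i, p') := Prod.ext h1 hpp
    exact (Prod.ext_iff.mp (e.injective this)).2
  let f : Fin b → Equiv.Perm (Fin a) := fun i =>
    Equiv.ofBijective _ (Finite.injective_iff_bijective.mp (finj i))
  refine ⟨⟨f, σ⟩, ?_⟩
  apply Subtype.ext
  apply Equiv.ext
  intro x
  apply Prod.ext
  · show (σ x.1 : Fin b) = (e x).1
    rw [σ_apply]
    exact epart _ he _ _ rfl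
  · show (f (σ x.1) x.2 : Fin a) = (e x).2
    show (e (σ.symm (σ x.1), x.2)).2 = (e x).2
    rw [Equiv.symm_apply_apply]

noncomputable def autEquivWreath (ha : 0 < a) :
    graphAut (pGraph (Fin b) (Fin a)) ≃* WreathSym a b :=
  (MulEquiv.ofBijective wHom ⟨wHom_injective ha, wHom_surjective ha⟩).symm

end Wreath

attribute [local instance] Classical.propDecidable

/-! ### Characteristic two helpers -/

section CharTwoField

variable {F : Type} [Field F]

lemma c2_eq_of_add (htwo : (2:F) = 0) {x y : F} (h : x + y = 0) : y = x := by
  linear_combination h - x * htwo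

lemma c2_sq_eq_one (htwo : (2:F) = 0) {x : F} (h : x * x = 1) : x = 1 := by
  have h0 : (x - 1) * (x - 1) = 0 := by linear_combination h + (1 - x) * htwo
  exact sub_eq_zero.mp (mul_self_eq_zero.mp h0)

noncomputable def sqEquiv [Fintype F] (htwo : (2:F) = 0) : F ≃ F :=
  Equiv.ofBijective (fun x => x * x) (Finite.injective_iff_bijective.mp (by
    intro x y h
    have h0 : (x - y) * (x - y) = 0 := by
      linear_combination h + (y * y - x * y) * htwo
    exact sub_eq_zero.mp (mul_self_eq_zero.mp h0)))

lemma sqEquiv_symm_spec [Fintype F] (htwo : (2:F) = 0) (t : F) :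
    (sqEquiv htwo).symm t * (sqEquiv htwo).symm t = t :=
  (sqEquiv htwo).apply_symm_apply t

lemma mul2 (A B : Matrix (Fin 2) (Fin 2) F) (i j : Fin 2) :
    (A * B) i j = A i 0 * B 0 j + A i 1 * B 1 j := by
  rw [Matrix.mul_apply, Fin.sum_univ_two]

end CharTwoField

/-! ### Involutions in SL(2,F), char 2 -/

section SLTwo

variable {F : Type} [Field F]

abbrev VT (F : Type) [Field F] : Type :=
  {x : Matrix.SpecialLinearGroup (Fin 2) F // x * x = 1 ∧ x ≠ 1}

abbrev YT (F : Type) [Field F] : Type := {y : F × F // y ≠ (0, 0)}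

def line (u v : F × F) : Prop := u.1 * v.2 = v.1 * u.2

/-- The underlying matrix of a vertex. -/
abbrev vmat (x : VT F) : Matrix (Fin 2) (Fin 2) F := (x.1 : Matrix (Fin 2) (Fin 2) F)

lemma vmat_mul_self (x : VT F) : vmat x * vmat x = 1 := by
  have := congrArg (fun z : Matrix.SpecialLinearGroup (Fin 2) F =>
    (z : Matrix (Fin 2) (Fin 2) F)) x.2.1
  simpa using this

lemma vmat_det (x : VT F) : (vmat x).det = 1 := x.1.2

lemma vmat_ne_one (x : VT F) : vmat x ≠ 1 := fun h => x.2.2 (Subtype.ext h)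

lemma vmat_entries (x : VT F) (i j : Fin 2) :
    vmat x i 0 * vmat x 0 j + vmat x i 1 * vmat x 1 j = (1 : Matrix (Fin 2) (Fin 2) F) i j := by
  rw [← mul2, vmat_mul_self]

lemma trace_eq (htwo : (2:F) = 0) (x : VT F) : vmat x 1 1 = vmat x 0 0 := by
  set A := vmat x with hA
  have e00 : A 0 0 * A 0 0 + A 0 1 * A 1 0 = 1 := by
    simpa [Matrix.one_apply] using vmat_entries x 0 0
  have e01 : A 0 0 * A 0 1 + A 0 1 * A 1 1 = 0 := by
    simpa [Matrix.one_apply] using vmat_entries x 0 1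
  have e10 : A 1 0 * A 0 0 + A 1 1 * A 1 0 = 0 := by
    simpa [Matrix.one_apply] using vmat_entries x 1 0
  by_cases htr : A 0 0 + A 1 1 = 0
  · exact c2_eq_of_add htwo htr
  · exfalso
    have hb : A 0 1 = 0 := by
      rcases mul_eq_zero.mp (show A 0 1 * (A 0 0 + A 1 1) = 0 by linear_combination e01) with h | h
      · exact h
      · exact absurd h htr
    have hc : A 1 0 = 0 := by
      rcases mul_eq_zero.mp (show A 1 0 * (A 0 0 + A 1 1) = 0 by linear_combination e10) with h | h
      · exact h
      · exact absurd h htr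
    have ha1 : A 0 0 = 1 := c2_sq_eq_one htwo (by linear_combination e00 - A 1 0 * hb)
    have hdet := vmat_det x
    rw [Matrix.det_fin_two, ← hA] at hdet
    have hd1 : A 1 1 = 1 := by linear_combination hdet - A 1 1 * ha1 + A 1 0 * hb
    exact htr (by rw [ha1, hd1]; linear_combination htwo)

lemma odiag_ne (htwo : (2:F) = 0) (x : VT F) : ¬(vmat x 0 1 = 0 ∧ vmat x 1 0 = 0) := by
  rintro ⟨hb, hc⟩
  set A := vmat x with hA
  have e00 : A 0 0 * A 0 0 + A 0 1 * A 1 0 = 1 := by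
    simpa [Matrix.one_apply] using vmat_entries x 0 0
  have ha1 : A 0 0 = 1 := c2_sq_eq_one htwo (by linear_combination e00 - A 1 0 * hb)
  have hd1 : A 1 1 = 1 := by rw [hA, trace_eq htwo x, ← hA]; exact ha1
  apply vmat_ne_one x
  rw [← hA, Matrix.eta_fin_two A, ha1, hd1, hb, hc, Matrix.one_fin_two]

lemma mat_comm {A B : Matrix (Fin 2) (Fin 2) F}
    (hA : A 1 1 = A 0 0) (hB : B 1 1 = B 0 0) :
    A * B = B * A ↔ A 0 1 * B 1 0 = B 0 1 * A 1 0 := by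
  constructor
  · intro h
    have h00 : (A * B) 0 0 = (B * A) 0 0 := by rw [h]
    rw [mul2, mul2] at h00
    linear_combination h00
  · intro h
    ext i j
    rw [mul2, mul2]
    fin_cases i <;> fin_cases j <;> simp only [Fin.mk_zero, Fin.mk_one]
    · linear_combination h
    · linear_combination A 0 1 * hB - B 0 1 * hA
    · linear_combination B 1 0 * hA - A 1 0 * hB
    · linear_combination - h

section WithFintype

variable [Fintype F]

/-- Building a vertex from a nonzero pair of off-diagonal entries. -/
noncomputable def mkV (htwo : (2:F) = 0) (y : F × F) (hy : y ≠ (0, 0)) : VT F := by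
  classical
  set s : F := (sqEquiv htwo).symm (1 - y.1 * y.2) with hsdef
  have hs : s * s = 1 - y.1 * y.2 := sqEquiv_symm_spec htwo _
  refine ⟨⟨!![s, y.1; y.2, s], ?_⟩, ?_, ?_⟩
  · rw [Matrix.det_fin_two_of]
    linear_combination hs - y.1 * y.2 * htwo
  · apply Subtype.ext
    show (!![s, y.1; y.2, s] : Matrix (Fin 2) (Fin 2) F) * !![s, y.1; y.2, s] = 1
    rw [Matrix.mul_fin_two, Matrix.one_fin_two]
    rw [show s * s + y.1 * y.2 = 1 by linear_combination hs,
      show s * y.1 + y.1 * s = 0 by linear_combination (s * y.1) * htwo,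
      show y.2 * s + s * y.2 = 0 by linear_combination (s * y.2) * htwo,
      show y.2 * y.1 + s * s = 1 by linear_combination hs]
  · intro h
    have hmat : (!![s, y.1; y.2, s] : Matrix (Fin 2) (Fin 2) F) = 1 :=
      congrArg (fun z : Matrix.SpecialLinearGroup (Fin 2) F =>
        (z : Matrix (Fin 2) (Fin 2) F)) h
    apply hy
    have h1 : y.1 = 0 := by
      have := congrFun (congrFun hmat 0) 1
      simpa [Matrix.one_apply] using this
    have h2 : y.2 = 0 := by
      have := congrFun (congrFun hmat 1) 0
      simpa [Matrix.one_apply] using this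
    exact Prod.ext h1 h2

lemma mkV_coe (htwo : (2:F) = 0) (y : F × F) (hy : y ≠ (0, 0)) :
    vmat (mkV htwo y hy) =
      !![(sqEquiv htwo).symm (1 - y.1 * y.2), y.1; y.2, (sqEquiv htwo).symm (1 - y.1 * y.2)] := rfl

/-- The parametrization of involutions by their off-diagonal entries. -/
noncomputable def e1 (htwo : (2:F) = 0) : VT F ≃ YT F where
  toFun x := ⟨(vmat x 0 1, vmat x 1 0), by
    intro h
    exact odiag_ne htwo x ⟨congrArg Prod.fst h, congrArg Prod.snd h⟩⟩
  invFun y := mkV htwo y.1 y.2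
  left_inv x := by
    apply Subtype.ext
    apply Subtype.ext
    show vmat (mkV htwo (vmat x 0 1, vmat x 1 0) _) = vmat x
    rw [mkV_coe]
    have e00 : vmat x 0 0 * vmat x 0 0 + vmat x 0 1 * vmat x 1 0 = 1 := by
      simpa [Matrix.one_apply] using vmat_entries x 0 0
    have hs : (sqEquiv htwo).symm (1 - (vmat x 0 1, vmat x 1 0).1 * (vmat x 0 1, vmat x 1 0).2)
        = vmat x 0 0 := by
      rw [Equiv.symm_apply_eq]
      show _ = vmat x 0 0 * vmat x 0 0
      linear_combination - e00
    rw [hs]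
    conv_rhs => rw [Matrix.eta_fin_two (vmat x)]
    rw [trace_eq htwo x]
  right_inv y := by
    apply Subtype.ext
    apply Prod.ext
    · show vmat (mkV htwo y.1 y.2) 0 1 = y.1.1
      rw [mkV_coe]; simp
    · show vmat (mkV htwo y.1 y.2) 1 0 = y.1.2
      rw [mkV_coe]; simp

lemma comm_iff (htwo : (2:F) = 0) (x y : VT F) :
    ((x.1 : Matrix.SpecialLinearGroup (Fin 2) F) * y.1 = y.1 * x.1) ↔
      line ((e1 htwo x) : F × F) ((e1 htwo y) : F × F) := by
  rw [show ((x.1 : Matrix.SpecialLinearGroup (Fin 2) F) * y.1 = y.1 * x.1) ↔ _ from Subtype.ext_iff]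
  show (vmat x * vmat y = vmat y * vmat x) ↔ _
  rw [mat_comm (trace_eq htwo x) (trace_eq htwo y)]
  exact Iff.rfl

end WithFintype

/-- The "same Sylow 2-subgroup" relation, on parameter space. -/
def lineSetoid (F : Type) [Field F] : Setoid (YT F) where
  r u v := line u.1 v.1
  iseqv := by
    refine ⟨fun u => rfl, fun {u v} h => h.symm, fun {u v w} h1 h2 => ?_⟩
    by_cases hv2 : v.1.2 = 0
    · have hv1 : v.1.1 ≠ 0 := fun h => v.2 (Prod.ext h hv2)
      have hu2 : u.1.2 = 0 := by
        have : v.1.1 * u.1.2 = 0 := by rw [← h1, hv2, mul_zero]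
        exact (mul_eq_zero.mp this).resolve_left hv1
      have hw2 : w.1.2 = 0 := by
        have : v.1.1 * w.1.2 = 0 := by
          have h2' : v.1.1 * w.1.2 = w.1.1 * v.1.2 := h2
          rw [h2', hv2, mul_zero]
        exact (mul_eq_zero.mp this).resolve_left hv1
      show u.1.1 * w.1.2 = w.1.1 * u.1.2
      rw [hu2, hw2, mul_zero, mul_zero]
    · have h1' : u.1.1 * v.1.2 = v.1.1 * u.1.2 := h1
      have h2' : v.1.1 * w.1.2 = w.1.1 * v.1.2 := h2
      show u.1.1 * w.1.2 = w.1.1 * u.1.2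
      apply mul_right_cancel₀ hv2
      linear_combination w.1.2 * h1' + u.1.2 * h2'

section Counting

variable [Fintype F]

lemma card_YT : Fintype.card (YT F) = Fintype.card F * Fintype.card F - 1 := by
  classical
  have h := Fintype.card_subtype_compl (fun y : F × F => y = (0, 0))
  have h2 : Fintype.card {y : F × F // y = (0, 0)} = 1 := Fintype.card_subtype_eq _
  rw [h2] at h
  rw [Fintype.card_congr (Equiv.subtypeEquivRight (fun y : F × F =>
    (Iff.rfl : y ≠ (0,0) ↔ ¬ y = (0,0)))), h, Fintype.card_prod]

noncomputable def unitsEquivClass (y₀ : YT F) : Fˣ ≃ {y : YT F // line y.1 y₀.1} := by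
  classical
  refine Equiv.ofBijective (fun u => ⟨⟨((u : F) * y₀.1.1, (u : F) * y₀.1.2), ?_⟩, ?_⟩) ⟨?_, ?_⟩
  · intro h
    apply y₀.2
    have h1 := congrArg Prod.fst h
    have h2 := congrArg Prod.snd h
    simp only at h1 h2
    exact Prod.ext ((mul_eq_zero.mp h1).resolve_left u.ne_zero)
      ((mul_eq_zero.mp h2).resolve_left u.ne_zero)
  · show (u:F) * y₀.1.1 * y₀.1.2 = y₀.1.1 * ((u:F) * y₀.1.2)
    ring
  · intro u v huv
    have hpair : ((u:F) * y₀.1.1, (u:F) * y₀.1.2) = ((v:F) * y₀.1.1, (v:F) * y₀.1.2) :=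
      Subtype.ext_iff.mp (Subtype.ext_iff.mp huv)
    have h1 : (u:F) * y₀.1.1 = (v:F) * y₀.1.1 := congrArg Prod.fst hpair
    have h2 : (u:F) * y₀.1.2 = (v:F) * y₀.1.2 := congrArg Prod.snd hpair
    have hy : ¬(y₀.1.1 = 0 ∧ y₀.1.2 = 0) := fun hh => y₀.2 (Prod.ext hh.1 hh.2)
    rcases not_and_or.mp hy with h | h
    · exact Units.ext (mul_right_cancel₀ h h1)
    · exact Units.ext (mul_right_cancel₀ h h2)
  · rintro ⟨⟨⟨u1, u2⟩, hu⟩, hline⟩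
    have hline' : u1 * y₀.1.2 = y₀.1.1 * u2 := hline
    by_cases hb : y₀.1.1 = 0
    · have hc : y₀.1.2 ≠ 0 := fun h => y₀.2 (Prod.ext hb h)
      have hu2 : u2 ≠ 0 := by
        intro h
        apply hu
        have hu1 : u1 = 0 := by
          have h0 : u1 * y₀.1.2 = 0 := by rw [hline', h, mul_zero]
          exact (mul_eq_zero.mp h0).resolve_right hc
        exact Prod.ext hu1 h
      refine ⟨Units.mk0 (u2 / y₀.1.2) (div_ne_zero hu2 hc), ?_⟩
      apply Subtype.ext
      apply Subtype.ext
      apply Prod.ext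
      · show u2 / y₀.1.2 * y₀.1.1 = u1
        rw [hb, mul_zero]
        have h0 : u1 * y₀.1.2 = 0 := by rw [hline', hb, zero_mul]
        exact ((mul_eq_zero.mp h0).resolve_right hc).symm
      · show u2 / y₀.1.2 * y₀.1.2 = u2
        exact div_mul_cancel₀ _ hc
    · have hu1 : u1 ≠ 0 := by
        intro h
        apply hu
        have hu2 : u2 = 0 := by
          have h0 : y₀.1.1 * u2 = 0 := by rw [← hline', h, zero_mul]
          exact (mul_eq_zero.mp h0).resolve_left hb
        exact Prod.ext h hu2
      refine ⟨Units.mk0 (u1 / y₀.1.1) (div_ne_zero hu1 hb), ?_⟩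
      apply Subtype.ext
      apply Subtype.ext
      apply Prod.ext
      · show u1 / y₀.1.1 * y₀.1.1 = u1
        exact div_mul_cancel₀ _ hb
      · show u1 / y₀.1.1 * y₀.1.2 = u2
        field_simp
        linear_combination hline'

lemma card_class (y₀ : YT F) :
    Fintype.card {y : YT F // line y.1 y₀.1} = Fintype.card F - 1 := by
  classical
  rw [← Fintype.card_congr (unitsEquivClass y₀), Fintype.card_units]

lemma card_fiber (c : Quotient (lineSetoid F)) :
    Fintype.card {y : YT F // Quotient.mk (lineSetoid F) y = c} = Fintype.card F - 1 := by
  classical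
  induction c using Quotient.inductionOn with
  | h y₀ =>
    rw [Fintype.card_congr (Equiv.subtypeEquivRight
      (p := fun y : YT F => Quotient.mk (lineSetoid F) y = Quotient.mk (lineSetoid F) y₀)
      (q := fun y : YT F => line y.1 y₀.1)
      (fun y => ⟨fun h => Quotient.exact h, fun h => Quotient.sound h⟩)), card_class]

lemma card_quotient {q : ℕ} (hF : Fintype.card F = q) (hq : 3 < q) :
    Fintype.card (Quotient (lineSetoid F)) = q + 1 := by
  classical
  have h1 : Fintype.card (YT F) = Fintype.card (Quotient (lineSetoid F)) * (q - 1) := by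
    rw [Fintype.card_congr (Equiv.sigmaFiberEquiv (Quotient.mk (lineSetoid F))).symm,
      Fintype.card_sigma]
    have hconst : ∀ c : Quotient (lineSetoid F),
        Fintype.card {y : YT F // Quotient.mk (lineSetoid F) y = c} = q - 1 := fun c => by
      rw [card_fiber, hF]
    rw [Finset.sum_congr rfl (fun c _ => hconst c), Finset.sum_const, Finset.card_univ,
      smul_eq_mul]
  have h2 : Fintype.card (YT F) = q * q - 1 := by rw [card_YT, hF]
  have h3 : Fintype.card (Quotient (lineSetoid F)) * (q - 1) = (q + 1) * (q - 1) := by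
    rw [← h1, h2]
    have h4 : (q + 1) * (q - 1) + 1 = q * q := by
      obtain ⟨k, rfl⟩ : ∃ k, q = k + 4 := ⟨q - 4, by omega⟩
      have hk : k + 4 - 1 = k + 3 := by omega
      rw [hk]; ring
    rw [← h4, Nat.add_sub_cancel]
  exact Nat.eq_of_mul_eq_mul_right (by omega) h3

end Counting

end SLTwo

noncomputable def bigIso {F : Type} [Field F] [Fintype F] {q : ℕ} (htwo : (2:F) = 0)
    (hF : Fintype.card F = q) (hq : 3 < q) :
    commGraph (Matrix.SpecialLinearGroup (Fin 2) F) ≃g pGraph (Fin (q+1)) (Fin (q-1)) := by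
  classical
  have cardQ := card_quotient (F := F) hF hq
  let qE : Quotient (lineSetoid F) ≃ Fin (q+1) := Fintype.equivFinOfCardEq cardQ
  let fibE : ∀ c : Quotient (lineSetoid F),
      {y : YT F // Quotient.mk (lineSetoid F) y = c} ≃ Fin (q-1) := fun c =>
    Fintype.equivFinOfCardEq (by rw [card_fiber, hF])
  let E : VT F ≃ Fin (q+1) × Fin (q-1) :=
    (e1 htwo).trans ((Equiv.sigmaFiberEquiv (Quotient.mk (lineSetoid F))).symm.trans
      ((Equiv.sigmaCongr qE fibE).trans (Equiv.sigmaEquivProd (Fin (q+1)) (Fin (q-1)))))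
  have Efst : ∀ x : VT F, (E x).1 = qE (Quotient.mk (lineSetoid F) (e1 htwo x)) := fun x => rfl
  refine { toEquiv := E, map_rel_iff' := ?_ }
  intro x y
  rw [pGraph_adj, commGraph_adj]
  apply and_congr
  · exact not_congr (Equiv.apply_eq_iff_eq E)
  · have step : (E x).1 = (E y).1 ↔ line ((e1 htwo x) : F × F) ((e1 htwo y) : F × F) := by
      rw [Efst, Efst, Equiv.apply_eq_iff_eq]
      exact ⟨fun h => Quotient.exact h, fun h => Quotient.sound h⟩
    exact step.trans (comm_iff htwo x y).symm

/-- For `q > 3` a power of `2` and `L = PSL(2,q)` with `X` its class of involutions, the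
automorphism group of the commuting involution graph `C(L,X)` is isomorphic to the wreath
product `Sym(q-1) ≀ Sym(q+1)`. -/
theorem stmt_1 (q : ℕ) (hq2 : ∃ n : ℕ, q = 2 ^ n) (hq3 : 3 < q)
    (F : Type) [Field F] [Fintype F] (hF : Fintype.card F = q) :
    Nonempty ((graphAut (commGraph (PSL(2, F)))) ≃* WreathSym (q - 1) (q + 1)) := by
  classical
  obtain ⟨n, hn⟩ := hq2
  have hn0 : n ≠ 0 := by rintro rfl; simp at hn; omega
  have htwo : (2:F) = 0 := by
    have hq0 : ((q : ℕ) : F) = 0 := by rw [← hF]; exact FiniteField.cast_card_eq_zero F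
    rw [hn, Nat.cast_pow] at hq0
    have h2 : ((2:ℕ) : F) = 0 := (pow_eq_zero_iff hn0).mp hq0
    exact_mod_cast h2
  have hcenter : Subgroup.center (Matrix.SpecialLinearGroup (Fin 2) F) = ⊥ := by
    rw [eq_bot_iff]
    intro A hA
    rw [Matrix.SpecialLinearGroup.mem_center_iff] at hA
    obtain ⟨r, hr, hrA⟩ := hA
    have hr2 : r ^ (2:ℕ) = 1 := by simpa using hr
    have hr1 : r = 1 := c2_sq_eq_one htwo (by rw [← pow_two]; exact hr2)
    rw [Subgroup.mem_bot]
    apply Subtype.ext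
    rw [← hrA, hr1]
    simp
  let ePSL : PSL(2,F) ≃* Matrix.SpecialLinearGroup (Fin 2) F :=
    (QuotientGroup.quotientMulEquivOfEq hcenter).trans QuotientGroup.quotientBot
  exact ⟨(graphAutCongr ((commGraphCongr ePSL).trans (bigIso htwo hF hq3))).trans
    (autEquivWreath (by omega))⟩
end

section
/- Let q > 11 be an odd prime power and L = PSL(2,q). For any two distinct involutions x, y in L, the intersection C_L(x) ∩ C_L(y) is either trivial, of order 2, or equal to the Klein four-group {1, x, y, xy} (the latter only when x and y commute). -/
open Matrix
open scoped MatrixGroups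

namespace Stmt3Aux

variable {F : Type} [Field F]

local notation "M2" => Matrix (Fin 2) (Fin 2) F
local notation "SL2" => Matrix.SpecialLinearGroup (Fin 2) F

instance : Fact (Even (Fintype.card (Fin 2))) := ⟨⟨1, rfl⟩⟩

/-- nonscalar predicate -/
def NS (U : M2) : Prop := U 0 1 ≠ 0 ∨ U 1 0 ≠ 0 ∨ U 0 0 ≠ U 1 1

theorem mul_entry (A B : M2) (i j : Fin 2) :
    (A * B) i j = A i 0 * B 0 j + A i 1 * B 1 j := by
  simp [Matrix.mul_apply, Fin.sum_univ_two]

theorem span_of_comm {U a : M2} (hU : NS U) (h : a * U = U * a) :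
    ∃ α β : F, a = α • (1 : M2) + β • U := by
  have e : ∀ i j : Fin 2, a i 0 * U 0 j + a i 1 * U 1 j
      = U i 0 * a 0 j + U i 1 * a 1 j := by
    intro i j
    have h' : (a * U) i j = (U * a) i j := by rw [h]
    simpa [mul_entry] using h'
  rcases hU with hq | hr | hps
  · refine ⟨a 0 0 - a 0 1 / U 0 1 * U 0 0, a 0 1 / U 0 1, ?_⟩
    ext i j
    fin_cases i <;> fin_cases j <;>
        simp only [Matrix.add_apply, Matrix.smul_apply, Matrix.one_apply, smul_eq_mul] <;>
        norm_num <;> field_simp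
    · linear_combination -e 0 0
    · linear_combination -e 0 1
  · refine ⟨a 0 0 - a 1 0 / U 1 0 * U 0 0, a 1 0 / U 1 0, ?_⟩
    ext i j
    fin_cases i <;> fin_cases j <;>
        simp only [Matrix.add_apply, Matrix.smul_apply, Matrix.one_apply, smul_eq_mul] <;>
        norm_num <;> field_simp
    · linear_combination e 0 0
    · linear_combination e 1 0
  · have hps' : U 0 0 - U 1 1 ≠ 0 := sub_ne_zero.mpr hps
    refine ⟨a 0 0 - (a 0 0 - a 1 1) / (U 0 0 - U 1 1) * U 0 0,
      (a 0 0 - a 1 1) / (U 0 0 - U 1 1), ?_⟩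
    ext i j
    fin_cases i <;> fin_cases j <;>
        simp only [Matrix.add_apply, Matrix.smul_apply, Matrix.one_apply, smul_eq_mul] <;>
        norm_num <;> field_simp
    · linear_combination -e 0 1
    · linear_combination e 1 0
    · ring

end Stmt3Aux

namespace Stmt3Aux

variable {F : Type} [Field F]

local notation "M2" => Matrix (Fin 2) (Fin 2) F
local notation "SL2" => Matrix.SpecialLinearGroup (Fin 2) F

/-- commutant of a nonscalar matrix is commutative -/
theorem comm_comm {U a b : M2} (hU : NS U) (ha : a * U = U * a) (hb : b * U = U * b) :
    a * b = b * a := by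
  obtain ⟨α, β, rfl⟩ := span_of_comm hU ha
  obtain ⟨γ, δ, rfl⟩ := span_of_comm hU hb
  simp only [add_mul, mul_add, smul_mul_assoc, mul_smul_comm, one_mul, mul_one, smul_smul]
  module

/-- Cayley–Hamilton for 2×2 -/
theorem sq_eq (U : M2) : U * U = (U 0 0 + U 1 1) • U - U.det • (1 : M2) := by
  ext i j
  fin_cases i <;> fin_cases j <;>
    simp [mul_entry, Matrix.det_fin_two, Matrix.one_apply] <;> ring

theorem smul_one_ne_zero (h2 : (2:F) ≠ 0) : True := trivial

theorem comm_of_anticomm {U a : M2} (h2 : (2:F) ≠ 0) (hU : NS U)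
    (ht : U 0 0 + U 1 1 ≠ 0) (hdet : U.det = 1) (h : a * U = -(U * a)) :
    a * U = U * a := by
  have hsq : a * (U * U) = (U * U) * a := by
    calc a * (U * U) = (a * U) * U := by rw [mul_assoc]
    _ = -((U * a) * U) := by rw [h, neg_mul]
    _ = -(U * (a * U)) := by rw [mul_assoc]
    _ = -(U * -(U * a)) := by rw [h]
    _ = U * U * a := by rw [mul_neg, neg_neg, mul_assoc]
  rw [sq_eq U, hdet] at hsq
  have h' : (U 0 0 + U 1 1) • (a * U) = (U 0 0 + U 1 1) • (U * a) := by
    have h3 := hsq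
    simp only [sub_mul, mul_sub, smul_mul_assoc, mul_smul_comm, one_smul, mul_one, one_mul] at h3
    exact sub_left_inj.mp h3
  exact smul_right_injective _ ht h'

end Stmt3Aux

namespace Stmt3Aux

variable {F : Type} [Field F]

local notation "M2" => Matrix (Fin 2) (Fin 2) F
local notation "SL2" => Matrix.SpecialLinearGroup (Fin 2) F

open Matrix.SpecialLinearGroup in
theorem center_iff {A : SL2} :
    A ∈ Subgroup.center SL2 ↔ A = 1 ∨ A = -1 := by
  constructor
  · intro hA
    obtain ⟨r, hr1, hr2⟩ := Matrix.SpecialLinearGroup.mem_center_iff.mp hA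
    rw [Fintype.card_fin] at hr1
    have hr : r = 1 ∨ r = -1 := mul_self_eq_one_iff.mp (by linear_combination hr1 - sq r + r * r)
    rcases hr with rfl | rfl
    · left
      apply Subtype.ext
      rw [Matrix.SpecialLinearGroup.coe_one, ← hr2]
      ext i j
      simp [Matrix.scalar_apply, Matrix.diagonal_apply, Matrix.one_apply]
    · right
      apply Subtype.ext
      rw [Matrix.SpecialLinearGroup.coe_neg, Matrix.SpecialLinearGroup.coe_one, ← hr2]
      ext i j
      by_cases hij : i = j <;>
        simp [Matrix.scalar_apply, Matrix.diagonal_apply, Matrix.one_apply, hij]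
  · rintro (rfl | rfl)
    · exact Subgroup.one_mem _
    · exact Subgroup.mem_center_iff.mpr fun g => by rw [mul_neg_one, neg_one_mul]

theorem ns_of_not_center {A : SL2} (h : A ∉ Subgroup.center SL2) : NS (↑A : M2) := by
  by_contra hns
  apply h
  simp only [NS, not_or, not_not, ne_eq] at hns
  obtain ⟨h01, h10, hd⟩ := hns
  apply Matrix.SpecialLinearGroup.mem_center_iff.mpr
  refine ⟨(↑A : M2) 0 0, ?_, ?_⟩
  · rw [Fintype.card_fin]
    have hdet : Matrix.det (↑A : M2) = 1 := A.2
    rw [Matrix.det_fin_two] at hdet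
    rw [sq]
    linear_combination hdet + (↑A : M2) 0 0 * hd + (↑A : M2) 0 1 * h10
  · ext i j
    fin_cases i <;> fin_cases j <;>
      simp [Matrix.scalar_apply, Matrix.diagonal_apply, h01, h10, hd]

end Stmt3Aux

namespace Stmt3Aux

variable {F : Type} [Field F]

local notation "M2" => Matrix (Fin 2) (Fin 2) F
local notation "SL2" => Matrix.SpecialLinearGroup (Fin 2) F

theorem ee {A B : M2} (h : A = B) (i j : Fin 2) : A i j = B i j := by rw [h]

/-- the projection SL → PSL -/
def pr : SL2 →* PSL(2, F) := QuotientGroup.mk' (Subgroup.center SL2)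

theorem pr_surjective : Function.Surjective (pr (F := F)) :=
  QuotientGroup.mk'_surjective _

theorem pr_eq_one_iff' {A : SL2} : pr A = 1 ↔ A ∈ Subgroup.center SL2 :=
  QuotientGroup.eq_one_iff A

theorem pr_eq_one_iff {A : SL2} : pr A = 1 ↔ A = 1 ∨ A = -1 := by
  rw [pr_eq_one_iff', center_iff]

theorem pr_eq_iff {A B : SL2} : pr A = pr B ↔ A = B ∨ A = -B := by
  rw [pr, QuotientGroup.mk'_eq_mk']
  constructor
  · rintro ⟨z, hz, hzz⟩
    rcases center_iff.mp hz with rfl | rfl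
    · left; rw [← hzz, mul_one]
    · right; rw [← hzz, mul_neg_one, neg_neg]
  · rintro (rfl | h)
    · exact ⟨1, Subgroup.one_mem _, mul_one A⟩
    · exact ⟨-1, center_iff.mpr (Or.inr rfl), by rw [mul_neg_one, h, neg_neg]⟩

theorem pr_commute_iff {A B : SL2} :
    pr A * pr B = pr B * pr A ↔ A * B = B * A ∨ A * B = -(B * A) := by
  rw [← _root_.map_mul, ← _root_.map_mul, pr_eq_iff]

theorem coe_eq {A B : SL2} (h : A = B) : (↑A : M2) = ↑B := congrArg _ h

theorem coe_neg_eq {A B : SL2} (h : A = -B) : (↑A : M2) = -(↑B : M2) := by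
  rw [h, Matrix.SpecialLinearGroup.coe_neg]

/-- from a matrix equation `(2c)•m = 0` with `det m = 1`, conclude `c = 0`. -/
theorem coeff_zero (h2 : (2 : F) ≠ 0) {c : F} {m : M2} (hm : m.det = 1)
    (h : (c + c) • m = 0) : c = 0 := by
  have hd := congrArg Matrix.det h
  rw [Matrix.det_smul, hm, Fintype.card_fin, Matrix.det_zero, mul_one] at hd
  have : c + c = 0 := by
    have := pow_eq_zero_iff (n := 2) (by norm_num) |>.mp hd
    exact this
  have h2c : (2 : F) * c = 0 := by linear_combination this
  rcases mul_eq_zero.mp h2c with h | h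
  · exact absurd h h2
  · exact h

theorem cancel_aux (h2 : (2 : F) ≠ 0) {α : F} {P Q : M2} (hP : P.det = 1)
    (h : α • P + Q = -(α • P) + Q) : α = 0 := by
  have h1 : α • P = -(α • P) := add_right_cancel h
  have h3 : (α + α) • P = 0 := by
    rw [add_smul]
    nth_rewrite 1 [h1]
    rw [neg_add_cancel]
  exact coeff_zero h2 hP h3

theorem eq_or_neg_of_smul {Z W : SL2} {β : F} (h : (↑Z : M2) = β • (↑W : M2)) :
    Z = W ∨ Z = -W := by
  have hd : β * β = 1 := by
    have := congrArg Matrix.det h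
    rw [Matrix.det_smul, Fintype.card_fin, Z.2, W.2, mul_one, sq] at this
    exact this.symm
  rcases mul_self_eq_one_iff.mp hd with rfl | rfl
  · left; exact Subtype.ext (by rw [h, one_smul])
  · right
    refine Subtype.ext ?_
    rw [h, Matrix.SpecialLinearGroup.coe_neg, neg_smul, one_smul]

/-- an involution of PSL lifts to `X` with `X² = -1` and `tr X = 0`. -/
theorem invol_data (h2 : (2 : F) ≠ 0) {X : SL2} (h1 : X ∉ Subgroup.center SL2)
    (hsq : X * X = 1 ∨ X * X = -1) :
    ((↑X : M2) * (↑X : M2)) = -1 ∧ (↑X : M2) 0 0 + (↑X : M2) 1 1 = 0 := by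
  have hNS := ns_of_not_center h1
  have hch := sq_eq (↑X : M2)
  rw [X.2] at hch
  rcases hsq with hs | hs
  · exfalso
    have hm : ((↑X : M2) * (↑X : M2)) = 1 := by
      have := coe_eq hs
      rw [Matrix.SpecialLinearGroup.coe_mul, Matrix.SpecialLinearGroup.coe_one] at this
      exact this
    rw [hm, one_smul, eq_sub_iff_add_eq] at hch
    have hkey : ((↑X : M2) 0 0 + (↑X : M2) 1 1) • (↑X : M2) = (1 : M2) + 1 := hch.symm
    by_cases ht : (↑X : M2) 0 0 + (↑X : M2) 1 1 = 0
    · rw [ht, zero_smul] at hkey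
      have := ee hkey.symm 0 0
      simp [Matrix.add_apply, Matrix.one_apply] at this
      exact h2 (by linear_combination this)
    · rcases hNS with h' | h' | h'
      · have := ee hkey 0 1
        simp [Matrix.add_apply, Matrix.one_apply, Matrix.smul_apply] at this
        exact h' (this.resolve_left ht)
      · have := ee hkey 1 0
        simp [Matrix.add_apply, Matrix.one_apply, Matrix.smul_apply] at this
        exact h' (this.resolve_left ht)
      · have e0 := ee hkey 0 0
        have e1 := ee hkey 1 1
        simp [Matrix.add_apply, Matrix.one_apply, Matrix.smul_apply] at e0 e1
        apply h'
        have hz : ((↑X : M2) 0 0 + (↑X : M2) 1 1) * ((↑X : M2) 0 0 - (↑X : M2) 1 1) = 0 := by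
          linear_combination e0 - e1
        rcases mul_eq_zero.mp hz with h'' | h''
        · exact absurd h'' ht
        · exact sub_eq_zero.mp h''
  · have hm : ((↑X : M2) * (↑X : M2)) = -1 := by
      have := coe_neg_eq hs
      rw [Matrix.SpecialLinearGroup.coe_mul, Matrix.SpecialLinearGroup.coe_one] at this
      exact this
    refine ⟨hm, ?_⟩
    rw [hm, one_smul, eq_sub_iff_add_eq, neg_add_cancel] at hch
    have hkey : ((↑X : M2) 0 0 + (↑X : M2) 1 1) • (↑X : M2) = 0 := hch.symm
    have hd := congrArg Matrix.det hkey
    rw [Matrix.det_smul, Fintype.card_fin, X.2, mul_one, Matrix.det_zero] at hd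
    exact pow_eq_zero_iff (by norm_num) |>.mp hd

end Stmt3Aux

namespace Stmt3Aux

variable {F : Type} [Field F]

local notation "M2" => Matrix (Fin 2) (Fin 2) F
local notation "SL2" => Matrix.SpecialLinearGroup (Fin 2) F

theorem half_zero (h2 : (2 : F) ≠ 0) {c : F} {m : M2} (hm : m.det = 1)
    (h : c • m = -(c • m)) : c = 0 := by
  have h3 : (c + c) • m = 0 := by
    rw [add_smul]
    nth_rewrite 1 [h]
    rw [neg_add_cancel]
  exact coeff_zero h2 hm h3

theorem psl_p1 (h2 : (2 : F) ≠ 0) {u a b : PSL(2, F)} (hu1 : u ≠ 1) (hu2 : u * u ≠ 1)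
    (ha : a * u = u * a) (hb : b * u = u * b) : a * b = b * a := by
  obtain ⟨U, rfl⟩ := pr_surjective u
  obtain ⟨A, rfl⟩ := pr_surjective a
  obtain ⟨B, rfl⟩ := pr_surjective b
  have hUc : U ∉ Subgroup.center SL2 := fun h => hu1 (pr_eq_one_iff'.mpr h)
  have hNS := ns_of_not_center hUc
  have ht : (↑U : M2) 0 0 + (↑U : M2) 1 1 ≠ 0 := by
    intro ht0
    apply hu2
    rw [← _root_.map_mul, pr_eq_one_iff]
    right
    apply Subtype.ext
    rw [Matrix.SpecialLinearGroup.coe_mul, Matrix.SpecialLinearGroup.coe_neg,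
      Matrix.SpecialLinearGroup.coe_one, sq_eq, U.2, ht0, zero_smul, one_smul, zero_sub]
  have key : ∀ C : SL2, pr C * pr U = pr U * pr C → (↑C : M2) * (↑U : M2) = (↑U : M2) * (↑C : M2) := by
    intro C hC
    rcases pr_commute_iff.mp hC with h | h
    · have := coe_eq h
      simpa using this
    · have hanti : (↑C : M2) * (↑U : M2) = -((↑U : M2) * (↑C : M2)) := by
        have := coe_neg_eq h
        simpa using this
      exact comm_of_anticomm h2 hNS ht U.2 hanti
  have hAB : (↑A : M2) * (↑B : M2) = (↑B : M2) * (↑A : M2) := comm_comm hNS (key A ha) (key B hb)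
  rw [← _root_.map_mul, ← _root_.map_mul]
  exact congrArg pr (Subtype.ext (by
    rw [Matrix.SpecialLinearGroup.coe_mul, Matrix.SpecialLinearGroup.coe_mul]; exact hAB))

theorem psl_p2 (h2 : (2 : F) ≠ 0) {x y z : PSL(2, F)}
    (hx2 : x * x = 1) (hx1 : x ≠ 1) (hy2 : y * y = 1) (hy1 : y ≠ 1)
    (hxy : x ≠ y) (hc : x * y = y * x)
    (hzx : z * x = x * z) (hzy : z * y = y * z) :
    z = 1 ∨ z = x ∨ z = y ∨ z = x * y := by
  obtain ⟨X, rfl⟩ := pr_surjective x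
  obtain ⟨Y, rfl⟩ := pr_surjective y
  obtain ⟨Z, rfl⟩ := pr_surjective z
  have hXc : X ∉ Subgroup.center SL2 := fun h => hx1 (pr_eq_one_iff'.mpr h)
  have hYc : Y ∉ Subgroup.center SL2 := fun h => hy1 (pr_eq_one_iff'.mpr h)
  have hXNS := ns_of_not_center hXc
  have hYNS := ns_of_not_center hYc
  have hXsq : X * X = 1 ∨ X * X = -1 := by
    rw [← pr_eq_one_iff, _root_.map_mul]; exact hx2
  have hYsq : Y * Y = 1 ∨ Y * Y = -1 := by
    rw [← pr_eq_one_iff, _root_.map_mul]; exact hy2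
  obtain ⟨sqX, trX⟩ := invol_data h2 hXc hXsq
  obtain ⟨sqY, trY⟩ := invol_data h2 hYc hYsq
  have detXY : ((↑X : M2) * (↑Y : M2)).det = 1 := by
    rw [Matrix.det_mul, X.2, Y.2, mul_one]
  have hne : ∀ β : F, (↑Y : M2) ≠ β • (↑X : M2) := by
    intro β hβ
    have hβ' : (↑Y : M2) = β • (↑(X : SL2) : M2) := hβ
    rcases eq_or_neg_of_smul hβ' with h | h
    · exact hxy (pr_eq_iff.mpr (Or.inl h)).symm
    · exact hxy (pr_eq_iff.mpr (Or.inr h)).symm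
  -- X and Y anticommute at the matrix level
  have anti : (↑X : M2) * (↑Y : M2) = -((↑Y : M2) * (↑X : M2)) := by
    rcases pr_commute_iff.mp hc with h | h
    · exfalso
      have hcm : (↑Y : M2) * (↑X : M2) = (↑X : M2) * (↑Y : M2) := by
        have := coe_eq h; simpa using this.symm
      obtain ⟨α, β, hspan⟩ := span_of_comm hXNS hcm
      have e0 := ee hspan 0 0
      have e1 := ee hspan 1 1
      simp [Matrix.add_apply, Matrix.one_apply, Matrix.smul_apply] at e0 e1
      have hα : (2 : F) * α = 0 := by linear_combination -e0 - e1 + trY - β * trX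
      have hα0 : α = 0 := by
        rcases mul_eq_zero.mp hα with h' | h'
        · exact absurd h' h2
        · exact h'
      rw [hα0, zero_smul, zero_add] at hspan
      exact hne β hspan
    · have := coe_neg_eq h; simpa using this
  have anti' : (↑Y : M2) * (↑X : M2) = -((↑X : M2) * (↑Y : M2)) := by rw [anti, neg_neg]
  rcases pr_commute_iff.mp hzx with hZX | hZX <;> rcases pr_commute_iff.mp hzy with hZY | hZY
  · -- Z commutes with both : Z = ±1
    left
    have mZX : (↑Z : M2) * (↑X : M2) = (↑X : M2) * (↑Z : M2) := by
      have := coe_eq hZX; simpa using this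
    have mZY : (↑Z : M2) * (↑Y : M2) = (↑Y : M2) * (↑Z : M2) := by
      have := coe_eq hZY; simpa using this
    obtain ⟨α, β, hspan⟩ := span_of_comm hXNS mZX
    have lhs : (↑Z : M2) * (↑Y : M2) = α • (↑Y : M2) + β • ((↑X : M2) * (↑Y : M2)) := by
      rw [hspan, add_mul, smul_mul_assoc, smul_mul_assoc, one_mul]
    have rhs : (↑Y : M2) * (↑Z : M2) = α • (↑Y : M2) + β • ((↑Y : M2) * (↑X : M2)) := by
      rw [hspan, mul_add, mul_smul_comm, mul_smul_comm, mul_one]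
    have hkey : β • ((↑X : M2) * (↑Y : M2)) = -(β • ((↑X : M2) * (↑Y : M2))) := by
      have step : α • (↑Y : M2) + β • ((↑X : M2) * (↑Y : M2))
          = α • (↑Y : M2) + -(β • ((↑X : M2) * (↑Y : M2))) := by
        calc α • (↑Y : M2) + β • ((↑X : M2) * (↑Y : M2)) = (↑Z : M2) * (↑Y : M2) := lhs.symm
        _ = (↑Y : M2) * (↑Z : M2) := mZY
        _ = α • (↑Y : M2) + β • ((↑Y : M2) * (↑X : M2)) := rhs
        _ = α • (↑Y : M2) + -(β • ((↑X : M2) * (↑Y : M2))) := by rw [anti', smul_neg]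
      exact add_left_cancel step
    have hβ0 : β = 0 := half_zero h2 detXY hkey
    rw [hβ0, zero_smul, add_zero] at hspan
    rw [pr_eq_one_iff]
    exact eq_or_neg_of_smul (W := 1) (by rw [Matrix.SpecialLinearGroup.coe_one]; exact hspan)
  · -- Z commutes with X, anticommutes with Y : Z = ±X
    right; left
    have mZX : (↑Z : M2) * (↑X : M2) = (↑X : M2) * (↑Z : M2) := by
      have := coe_eq hZX; simpa using this
    have mZY : (↑Z : M2) * (↑Y : M2) = -((↑Y : M2) * (↑Z : M2)) := by
      have := coe_neg_eq hZY; simpa using this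
    obtain ⟨α, β, hspan⟩ := span_of_comm hXNS mZX
    have lhs : (↑Z : M2) * (↑Y : M2) = α • (↑Y : M2) + β • ((↑X : M2) * (↑Y : M2)) := by
      rw [hspan, add_mul, smul_mul_assoc, smul_mul_assoc, one_mul]
    have rhs : (↑Y : M2) * (↑Z : M2) = α • (↑Y : M2) + β • ((↑Y : M2) * (↑X : M2)) := by
      rw [hspan, mul_add, mul_smul_comm, mul_smul_comm, mul_one]
    have hkey : α • (↑Y : M2) + β • ((↑X : M2) * (↑Y : M2))
        = -(α • (↑Y : M2)) + β • ((↑X : M2) * (↑Y : M2)) := by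
      calc α • (↑Y : M2) + β • ((↑X : M2) * (↑Y : M2)) = (↑Z : M2) * (↑Y : M2) := lhs.symm
      _ = -((↑Y : M2) * (↑Z : M2)) := mZY
      _ = -(α • (↑Y : M2) + β • ((↑Y : M2) * (↑X : M2))) := by rw [rhs]
      _ = -(α • (↑Y : M2)) + β • ((↑X : M2) * (↑Y : M2)) := by
          rw [anti', smul_neg, neg_add, neg_neg]
    have hα0 : α = 0 := cancel_aux h2 Y.2 hkey
    rw [hα0, zero_smul, zero_add] at hspan
    exact pr_eq_iff.mpr (eq_or_neg_of_smul hspan)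
  · -- Z anticommutes with X, commutes with Y : Z = ±Y
    right; right; left
    have mZX : (↑Z : M2) * (↑X : M2) = -((↑X : M2) * (↑Z : M2)) := by
      have := coe_neg_eq hZX; simpa using this
    have mZY : (↑Z : M2) * (↑Y : M2) = (↑Y : M2) * (↑Z : M2) := by
      have := coe_eq hZY; simpa using this
    obtain ⟨α, β, hspan⟩ := span_of_comm hYNS mZY
    have lhs : (↑Z : M2) * (↑X : M2) = α • (↑X : M2) + β • ((↑Y : M2) * (↑X : M2)) := by
      rw [hspan, add_mul, smul_mul_assoc, smul_mul_assoc, one_mul]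
    have rhs : (↑X : M2) * (↑Z : M2) = α • (↑X : M2) + β • ((↑X : M2) * (↑Y : M2)) := by
      rw [hspan, mul_add, mul_smul_comm, mul_smul_comm, mul_one]
    have hkey : α • (↑X : M2) + β • ((↑Y : M2) * (↑X : M2))
        = -(α • (↑X : M2)) + β • ((↑Y : M2) * (↑X : M2)) := by
      calc α • (↑X : M2) + β • ((↑Y : M2) * (↑X : M2)) = (↑Z : M2) * (↑X : M2) := lhs.symm
      _ = -((↑X : M2) * (↑Z : M2)) := mZX
      _ = -(α • (↑X : M2) + β • ((↑X : M2) * (↑Y : M2))) := by rw [rhs]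
      _ = -(α • (↑X : M2)) + β • ((↑Y : M2) * (↑X : M2)) := by
          rw [anti, smul_neg, neg_add, neg_neg]
    have hα0 : α = 0 := cancel_aux h2 X.2 hkey
    rw [hα0, zero_smul, zero_add] at hspan
    exact pr_eq_iff.mpr (eq_or_neg_of_smul hspan)
  · -- Z anticommutes with both : Z = ±XY
    right; right; right
    have mZX : (↑Z : M2) * (↑X : M2) = -((↑X : M2) * (↑Z : M2)) := by
      have := coe_neg_eq hZX; simpa using this
    have mZY : (↑Z : M2) * (↑Y : M2) = -((↑Y : M2) * (↑Z : M2)) := by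
      have := coe_neg_eq hZY; simpa using this
    have hWc : (↑Z : M2) * ((↑X : M2) * (↑Y : M2)) = ((↑X : M2) * (↑Y : M2)) * (↑Z : M2) := by
      calc (↑Z : M2) * ((↑X : M2) * (↑Y : M2)) = ((↑Z : M2) * (↑X : M2)) * (↑Y : M2) := (mul_assoc _ _ _).symm
      _ = -((↑X : M2) * (↑Z : M2)) * (↑Y : M2) := by rw [mZX]
      _ = -((↑X : M2) * ((↑Z : M2) * (↑Y : M2))) := by rw [neg_mul, mul_assoc]
      _ = -((↑X : M2) * -((↑Y : M2) * (↑Z : M2))) := by rw [mZY]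
      _ = (↑X : M2) * ((↑Y : M2) * (↑Z : M2)) := by rw [mul_neg, neg_neg]
      _ = ((↑X : M2) * (↑Y : M2)) * (↑Z : M2) := (mul_assoc _ _ _).symm
    have hWNS : NS ((↑X : M2) * (↑Y : M2)) := by
      by_contra hns
      simp only [NS, not_or, not_not, ne_eq] at hns
      obtain ⟨h01, h10, hd⟩ := hns
      have hWs : (↑X : M2) * (↑Y : M2) = ((↑X : M2) * (↑Y : M2)) 0 0 • (1 : M2) := by
        ext i j
        fin_cases i <;> fin_cases j <;>
          simp [Matrix.smul_apply, Matrix.one_apply, h01, h10, ← hd]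
      have hYX : (↑Y : M2) = (-(((↑X : M2) * (↑Y : M2)) 0 0)) • (↑X : M2) := by
        have hstep : (↑X : M2) * ((↑X : M2) * (↑Y : M2)) = -(↑Y : M2) := by
          rw [← mul_assoc, sqX, neg_one_mul]
        rw [hWs, mul_smul_comm, mul_one] at hstep
        rw [neg_smul, hstep, neg_neg]
      exact hne _ hYX
    obtain ⟨α, β, hspan⟩ := span_of_comm hWNS hWc
    have hWX : ((↑X : M2) * (↑Y : M2)) * (↑X : M2) = (↑Y : M2) := by
      calc ((↑X : M2) * (↑Y : M2)) * (↑X : M2) = (↑X : M2) * ((↑Y : M2) * (↑X : M2)) := mul_assoc _ _ _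
      _ = (↑X : M2) * -((↑X : M2) * (↑Y : M2)) := by rw [anti']
      _ = -(((↑X : M2) * (↑X : M2)) * (↑Y : M2)) := by rw [mul_neg, mul_assoc]
      _ = (↑Y : M2) := by rw [sqX, neg_one_mul, neg_neg]
    have hXW : (↑X : M2) * ((↑X : M2) * (↑Y : M2)) = -(↑Y : M2) := by
      rw [← mul_assoc, sqX, neg_one_mul]
    have lhs : (↑Z : M2) * (↑X : M2) = α • (↑X : M2) + β • (↑Y : M2) := by
      rw [hspan, add_mul, smul_mul_assoc, smul_mul_assoc, one_mul, hWX]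
    have rhs : (↑X : M2) * (↑Z : M2) = α • (↑X : M2) + -(β • (↑Y : M2)) := by
      rw [hspan, mul_add, mul_smul_comm, mul_smul_comm, mul_one, hXW, smul_neg]
    have hkey : α • (↑X : M2) + β • (↑Y : M2)
        = -(α • (↑X : M2)) + β • (↑Y : M2) := by
      calc α • (↑X : M2) + β • (↑Y : M2) = (↑Z : M2) * (↑X : M2) := lhs.symm
      _ = -((↑X : M2) * (↑Z : M2)) := mZX
      _ = -(α • (↑X : M2) + -(β • (↑Y : M2))) := by rw [rhs]
      _ = -(α • (↑X : M2)) + β • (↑Y : M2) := by rw [neg_add, neg_neg]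
    have hα0 : α = 0 := cancel_aux h2 X.2 hkey
    rw [hα0, zero_smul, zero_add] at hspan
    rw [← _root_.map_mul]
    have hspan' : (↑Z : M2) = β • (↑(X * Y) : M2) := by
      rw [Matrix.SpecialLinearGroup.coe_mul]; exact hspan
    exact pr_eq_iff.mpr (eq_or_neg_of_smul hspan')

end Stmt3Aux

namespace Stmt3Aux

/-- any two elements of a Klein set commute -/
theorem klein_comm {G : Type*} [Group G] {z w a b : G} (hzw : Commute z w)
    (ha : a = 1 ∨ a = z ∨ a = w ∨ a = z * w)
    (hb : b = 1 ∨ b = z ∨ b = w ∨ b = z * w) : Commute a b := by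
  have cz : ∀ g : G, (g = 1 ∨ g = z ∨ g = w ∨ g = z * w) → Commute z g := by
    rintro g (rfl | rfl | rfl | rfl)
    · exact Commute.one_right _
    · exact Commute.refl _
    · exact hzw
    · exact (Commute.refl _).mul_right hzw
  have cw : ∀ g : G, (g = 1 ∨ g = z ∨ g = w ∨ g = z * w) → Commute w g := by
    rintro g (rfl | rfl | rfl | rfl)
    · exact Commute.one_right _
    · exact hzw.symm
    · exact Commute.refl _
    · exact hzw.symm.mul_right (Commute.refl _)
  rcases ha with rfl | rfl | rfl | rfl
  · exact Commute.one_left b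
  · exact cz b hb
  · exact cw b hb
  · exact (cz b hb).mul_left (cw b hb)

end Stmt3Aux

open Stmt3Aux in
/-- For `q > 11` an odd prime power and `L = PSL(2,q)`, the intersection of the centralizers of
two distinct involutions `x, y` of `L` is trivial, of order `2`, or equal to the Klein
four-group `{1, x, y, xy}` (the latter occurring only when `x` and `y` commute). -/
theorem stmt_3 (q : ℕ) (hq : Odd q) (hq11 : 11 < q)
    (F : Type) [Field F] [Fintype F] (hF : Fintype.card F = q)
    (x y : PSL(2, F))
    (hx : x * x = 1 ∧ x ≠ 1) (hy : y * y = 1 ∧ y ≠ 1) (hxy : x ≠ y) :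
    Subgroup.centralizer {x} ⊓ Subgroup.centralizer {y} = (⊥ : Subgroup (PSL(2, F))) ∨
    Nat.card (Subgroup.centralizer {x} ⊓ Subgroup.centralizer {y} : Subgroup (PSL(2, F))) = 2 ∨
    (((Subgroup.centralizer {x} ⊓ Subgroup.centralizer {y} : Subgroup (PSL(2, F))) : Set (PSL(2, F)))
        = {1, x, y, x * y} ∧ x * y = y * x) := by
  obtain ⟨hx2, hx1⟩ := hx
  obtain ⟨hy2, hy1⟩ := hy
  -- the characteristic is odd
  have h2 : (2 : F) ≠ 0 := by
    intro h
    have h2' : ((2 : ℕ) : F) = 0 := by exact_mod_cast h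
    have hdvd : ringChar F ∣ 2 := ringChar.dvd h2'
    haveI := ringChar.charP F
    have hprime : (ringChar F).Prime := CharP.char_is_prime F (ringChar F)
    have hchar2 : ringChar F = 2 := (Nat.prime_dvd_prime_iff_eq hprime Nat.prime_two).mp hdvd
    haveI : CharP F 2 := hchar2 ▸ ringChar.charP F
    obtain ⟨n, -, hcard⟩ := FiniteField.card F 2
    rw [hF] at hcard
    have : ¬ Odd q := by
      rw [hcard, ← Nat.not_even_iff_odd]
      intro hodd
      exact hodd (Nat.even_pow.mpr ⟨even_two, n.pos.ne'⟩)
    exact this hq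
  have memc : ∀ (g h : PSL(2, F)), g ∈ Subgroup.centralizer {h} ↔ h * g = g * h := by
    intro g h
    rw [Subgroup.mem_centralizer_iff]
    simp
  by_cases hc : x * y = y * x
  · right; right
    refine ⟨?_, hc⟩
    ext g
    simp only [Subgroup.coe_inf, Set.mem_inter_iff, SetLike.mem_coe, memc]
    constructor
    · rintro ⟨hgx, hgy⟩
      have := psl_p2 h2 hx2 hx1 hy2 hy1 hxy hc hgx.symm hgy.symm
      simpa using this
    · intro hg
      simp only [Set.mem_insert_iff, Set.mem_singleton_iff] at hg
      rcases hg with rfl | rfl | rfl | rfl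
      · simp
      · exact ⟨rfl, hc.symm⟩
      · exact ⟨hc, rfl⟩
      · constructor
        · rw [mul_assoc, hc]
        · rw [← mul_assoc, ← hc]
  · by_cases hbot : Subgroup.centralizer {x} ⊓ Subgroup.centralizer {y}
        = (⊥ : Subgroup (PSL(2, F)))
    · left; exact hbot
    right; left
    obtain ⟨z, hzmem, hz1⟩ :
        ∃ z, z ∈ Subgroup.centralizer {x} ⊓ Subgroup.centralizer {y} ∧ z ≠ 1 := by
      by_contra h
      push_neg at h
      exact hbot ((Subgroup.eq_bot_iff_forall _).mpr h)
    have hmem : ∀ w, w ∈ Subgroup.centralizer {x} ⊓ Subgroup.centralizer {y} →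
        x * w = w * x ∧ y * w = w * y := by
      intro w hw
      obtain ⟨h1, h2'⟩ := Subgroup.mem_inf.mp hw
      exact ⟨(memc w x).mp h1, (memc w y).mp h2'⟩
    have hinv : ∀ w, w ∈ Subgroup.centralizer {x} ⊓ Subgroup.centralizer {y} →
        w ≠ 1 → w * w = 1 := by
      intro w hw hw1
      by_contra hww
      obtain ⟨h1, h2'⟩ := hmem w hw
      exact hc (psl_p1 h2 hw1 hww h1 h2')
    have key : ∀ w, w ∈ Subgroup.centralizer {x} ⊓ Subgroup.centralizer {y} →
        w = 1 ∨ w = z := by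
      intro w hw
      by_contra hcon
      push_neg at hcon
      obtain ⟨hw1, hwz⟩ := hcon
      have hzz := hinv z hzmem hz1
      have hww := hinv w hw hw1
      have hzw_mem := mul_mem hzmem hw
      have hzinv : z⁻¹ = z := inv_eq_of_mul_eq_one_right hzz
      have hwinv : w⁻¹ = w := inv_eq_of_mul_eq_one_right hww
      have hzw1 : z * w ≠ 1 := by
        intro h
        have h' : z⁻¹ = w := inv_eq_of_mul_eq_one_right h
        rw [hzinv] at h'
        exact hwz h'.symm
      have hzwzw := hinv (z * w) hzw_mem hzw1
      have hcomm_zw : z * w = w * z :=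
        calc z * w = (z * w)⁻¹ := (inv_eq_of_mul_eq_one_right hzwzw).symm
        _ = w⁻¹ * z⁻¹ := mul_inv_rev z w
        _ = w * z := by rw [hzinv, hwinv]
      have hzwne : z ≠ w := fun h => hwz h.symm
      obtain ⟨hxz, hyz⟩ := hmem z hzmem
      obtain ⟨hxw, hyw⟩ := hmem w hw
      have hxmem := psl_p2 h2 hzz hz1 hww hw1 hzwne hcomm_zw hxz hxw
      have hymem := psl_p2 h2 hzz hz1 hww hw1 hzwne hcomm_zw hyz hyw
      exact hc (klein_comm hcomm_zw hxmem hymem)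
    have hset : ((Subgroup.centralizer {x} ⊓ Subgroup.centralizer {y} :
        Subgroup (PSL(2, F))) : Set (PSL(2, F))) = {1, z} := by
      ext w
      simp only [SetLike.mem_coe, Set.mem_insert_iff, Set.mem_singleton_iff]
      constructor
      · exact key w
      · rintro (rfl | rfl)
        · exact one_mem _
        · exact hzmem
    rw [← SetLike.coe_sort_coe, hset, Nat.card_coe_set_eq]
    exact Set.ncard_pair hz1.symm
end

section
/- Let q > 11 be an odd prime power, L = PSL(2,q), X its class of involutions, and C(L,X) the commuting involution graph. For all distinct x,y in X, the number of common neighbours |Δ_1(x) ∩ Δ_1(y)| is at most 1. In particular C(L,X) contains no 4-cycles. -/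
open Matrix
open scoped MatrixGroups

variable {F : Type} [Field F]

/-- Cayley–Hamilton for 2×2. -/
lemma sq_fin_two (M : Matrix (Fin 2) (Fin 2) F) :
    M * M = M.trace • M - M.det • (1 : Matrix (Fin 2) (Fin 2) F) := by
  ext i j
  fin_cases i <;> fin_cases j <;>
    simp [Matrix.mul_apply, Fin.sum_univ_two, Matrix.trace_fin_two, Matrix.det_fin_two,
      Matrix.one_apply] <;> ring

/-- Centralizer of a traceless invertible 2×2 matrix among traceless matrices. -/
lemma cent_lemma (h2 : (2:F) ≠ 0) (A N : Matrix (Fin 2) (Fin 2) F) (hAt : A.trace = 0)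
    (hAd : A.det = 1) (hNt : N.trace = 0) (hc : N * A = A * N) : ∃ β : F, N = β • A := by
  rw [Matrix.trace_fin_two] at hAt hNt
  have hA11 : A 1 1 = -A 0 0 := by linear_combination hAt
  have hN11 : N 1 1 = -N 0 0 := by linear_combination hNt
  have hd : A 0 0 * A 1 1 - A 0 1 * A 1 0 = 1 := by rw [← Matrix.det_fin_two]; exact hAd
  have e00 : (N * A) 0 0 = (A * N) 0 0 := by rw [hc]
  have e01 : (N * A) 0 1 = (A * N) 0 1 := by rw [hc]
  have e10 : (N * A) 1 0 = (A * N) 1 0 := by rw [hc]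
  simp only [Matrix.mul_apply, Fin.sum_univ_two] at e00 e01 e10
  rw [hA11] at hd e01 e10
  rw [hN11] at e01 e10
  set a := A 0 0; set b := A 0 1; set c := A 1 0
  set e := N 0 0; set f := N 0 1; set g := N 1 0
  have h1 : e * b = a * f := by
    apply mul_left_cancel₀ h2; linear_combination e01
  have h2eq : a * g = c * e := by
    apply mul_left_cancel₀ h2; linear_combination e10
  have h3 : f * c = b * g := by linear_combination e00
  rcases eq_or_ne a 0 with ha | ha
  · have hb : b ≠ 0 := by intro hb; rw [ha, hb] at hd; simp at hd
    have he : e = 0 := by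
      rcases mul_eq_zero.mp (by rw [h1, ha, zero_mul] : e * b = 0) with h | h
      · exact h
      · exact absurd h hb
    refine ⟨f / b, ?_⟩
    ext i j; fin_cases i <;> fin_cases j <;> simp only [Matrix.smul_apply, smul_eq_mul]
    · show e = f / b * a; rw [he, ha, mul_zero]
    · show f = f / b * b; field_simp
    · show g = f / b * c; rw [div_mul_eq_mul_div, eq_div_iff hb]; linear_combination -h3
    · show N 1 1 = f / b * A 1 1; rw [hN11, hA11, he, ha]; ring
  · refine ⟨e / a, ?_⟩
    ext i j; fin_cases i <;> fin_cases j <;> simp only [Matrix.smul_apply, smul_eq_mul]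
    · show e = e / a * a; field_simp
    · show f = e / a * b; rw [div_mul_eq_mul_div, eq_div_iff ha]; linear_combination -h1
    · show g = e / a * c; rw [div_mul_eq_mul_div, eq_div_iff ha]; linear_combination h2eq
    · show N 1 1 = e / a * A 1 1; rw [hN11, hA11]; field_simp
variable {F : Type} [Field F]

local notation "SL2" => Matrix.SpecialLinearGroup (Fin 2) F

lemma center_iff (A : SL2) : A ∈ Subgroup.center SL2 ↔ A = 1 ∨ A = -1 := by
  constructor
  · intro h
    obtain ⟨r, hr, hs⟩ := Matrix.SpecialLinearGroup.mem_center_iff.mp h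
    rw [Fintype.card_fin] at hr
    have hr' : r = 1 ∨ r = -1 := mul_self_eq_one_iff.mp (by rw [← sq]; exact hr)
    rcases hr' with rfl | rfl
    · left; ext i j; rw [← hs]; simp [Matrix.scalar_apply, Matrix.one_apply, Matrix.diagonal_apply]
    · right; ext i j
      rw [← hs]
      simp [Matrix.scalar_apply, Matrix.one_apply, Matrix.diagonal_apply]
      split <;> simp_all
  · rintro (rfl | rfl)
    · exact Subgroup.one_mem _
    · rw [Subgroup.mem_center_iff]
      intro B; ext i j; simp

lemma mk_eq_one_iff (A : SL2) : (QuotientGroup.mk A : PSL(2,F)) = 1 ↔ A = 1 ∨ A = -1 := by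
  rw [QuotientGroup.eq_one_iff, center_iff]

lemma mk_neg (A : SL2) : (QuotientGroup.mk (-A) : PSL(2,F)) = QuotientGroup.mk A := by
  have h : (-A : SL2) = A * (-1) := by ext i j; simp
  rw [h, QuotientGroup.mk_mul, (mk_eq_one_iff (-1)).mpr (Or.inr rfl), mul_one]

lemma mk_eq_mk_iff (A B : SL2) :
    (QuotientGroup.mk A : PSL(2,F)) = QuotientGroup.mk B ↔ B = A ∨ B = -A := by
  rw [QuotientGroup.eq, center_iff]
  constructor
  · rintro (h | h)
    · left; rw [← mul_left_cancel_iff (a := A), ← mul_assoc, mul_inv_cancel] at h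
      simp at h; exact h
    · right
      have : B = A * (-1) := by
        rw [← h]; rw [← mul_assoc, mul_inv_cancel, one_mul]
      rw [this]; ext i j; simp
  · rintro (rfl | rfl)
    · left; simp
    · right
      have : A⁻¹ * -A = -(A⁻¹ * A) := by ext i j; simp
      rw [this, inv_mul_cancel]

lemma det_coe (A : SL2) : Matrix.det (A : Matrix (Fin 2) (Fin 2) F) = 1 := A.2

lemma coe_ne_zero (A : SL2) : (A : Matrix (Fin 2) (Fin 2) F) ≠ 0 := by
  intro h
  have := det_coe A
  rw [h] at this
  simp at this

/-- An involution of `PSL(2,F)` lifts to a traceless matrix squaring to `-1`. -/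
lemma invol_lift (h2 : (2:F) ≠ 0) (A : SL2)
    (h1 : (QuotientGroup.mk A : PSL(2,F)) ≠ 1)
    (hsq : (QuotientGroup.mk A : PSL(2,F)) * QuotientGroup.mk A = 1) :
    Matrix.trace (A : Matrix (Fin 2) (Fin 2) F) = 0 ∧
      (A : Matrix (Fin 2) (Fin 2) F) * A = -1 := by
  rw [← QuotientGroup.mk_mul, mk_eq_one_iff] at hsq
  rcases hsq with h | h
  · exfalso
    -- A*A = 1 forces A = ±1, contradicting h1
    have hm : (A : Matrix (Fin 2) (Fin 2) F) * A = 1 := by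
      rw [← Matrix.SpecialLinearGroup.coe_mul, h]; simp
    rw [sq_fin_two, det_coe] at hm
    set t := Matrix.trace (A : Matrix (Fin 2) (Fin 2) F) with ht
    have hm' : t • (A : Matrix (Fin 2) (Fin 2) F) = (2:F) • 1 := by
      have : t • (A : Matrix (Fin 2) (Fin 2) F) - (1:F) • 1 = 1 := hm
      rw [sub_eq_iff_eq_add] at this
      rw [this]
      ext i j; by_cases hij : i = j <;> simp [Matrix.one_apply, hij] <;> try ring
    have ht0 : t ≠ 0 := by
      intro h0
      have := congr_fun (congr_fun hm' 0) 0
      rw [h0] at this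
      simp [Matrix.one_apply] at this
      exact h2 this.symm
    -- A = (2/t) • 1
    have hA : (A : Matrix (Fin 2) (Fin 2) F) = (2/t) • 1 := by
      have := congr_arg (fun M => t⁻¹ • M) hm'
      simp only [smul_smul, inv_mul_cancel₀ ht0, one_smul] at this
      rw [this]; congr 1; field_simp
    set s := (2:F)/t with hs
    have hdet : s * s = 1 := by
      have := det_coe A
      rw [hA] at this
      rw [Matrix.det_smul] at this
      simpa [Fintype.card_fin, sq] using this
    rcases mul_self_eq_one_iff.mp hdet with h1' | h1'
    · exact h1 ((mk_eq_one_iff A).mpr (Or.inl (by ext i j; rw [hA, h1']; simp)))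
    · exact h1 ((mk_eq_one_iff A).mpr (Or.inr (by ext i j; rw [hA, h1']; simp)))
  · -- A*A = -1 : trace is 0
    have hm : (A : Matrix (Fin 2) (Fin 2) F) * A = -1 := by
      rw [← Matrix.SpecialLinearGroup.coe_mul, h]; simp
    refine ⟨?_, hm⟩
    have h' := hm
    rw [sq_fin_two, det_coe] at h'
    have h'' : Matrix.trace (A : Matrix (Fin 2) (Fin 2) F) •
        (A : Matrix (Fin 2) (Fin 2) F) = 0 := by
      have : Matrix.trace (A : Matrix (Fin 2) (Fin 2) F) • (A : Matrix (Fin 2) (Fin 2) F)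
          - (1:F) • 1 = -1 := h'
      rw [sub_eq_iff_eq_add] at this
      rw [this]; ext i j; simp
    rcases smul_eq_zero.mp h'' with h0 | h0
    · exact h0
    · exact absurd h0 (coe_ne_zero A)

/-- Traceless commuting elements of `SL₂` are equal up to sign. -/
lemma comm_traceless (h2 : (2:F) ≠ 0) (A B : SL2)
    (hAt : Matrix.trace (A : Matrix (Fin 2) (Fin 2) F) = 0)
    (hBt : Matrix.trace (B : Matrix (Fin 2) (Fin 2) F) = 0)
    (hc : (B : Matrix (Fin 2) (Fin 2) F) * A = (A : Matrix (Fin 2) (Fin 2) F) * B) :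
    B = A ∨ B = -A := by
  obtain ⟨β, hβ⟩ := cent_lemma h2 _ _ hAt (det_coe A) hBt hc
  have hdet : β * β = 1 := by
    have := det_coe B
    rw [hβ, Matrix.det_smul, det_coe] at this
    simpa [Fintype.card_fin, sq] using this
  rcases mul_self_eq_one_iff.mp hdet with rfl | rfl
  · left; ext i j; rw [hβ]; simp
  · right; ext i j; rw [hβ]; simp

/-- Adjacent involutions have anticommuting lifts. -/
lemma adj_anticomm (h2 : (2:F) ≠ 0)
    {x z : {x : PSL(2,F) // x * x = 1 ∧ x ≠ 1}} (A C : SL2)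
    (hA : (QuotientGroup.mk A : PSL(2,F)) = x.1)
    (hC : (QuotientGroup.mk C : PSL(2,F)) = z.1)
    (hadj : (commGraph (PSL(2,F))).Adj x z) :
    (C : Matrix (Fin 2) (Fin 2) F) * A = -((A : Matrix (Fin 2) (Fin 2) F) * C) := by
  have tA := (invol_lift h2 A (by rw [hA]; exact x.2.2) (by rw [hA]; exact x.2.1)).1
  have tC := (invol_lift h2 C (by rw [hC]; exact z.2.2) (by rw [hC]; exact z.2.1)).1
  have hcomm : (QuotientGroup.mk (A * C) : PSL(2,F)) = QuotientGroup.mk (C * A) := by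
    rw [QuotientGroup.mk_mul, QuotientGroup.mk_mul, hA, hC]
    exact (show x ≠ z ∧ _ from hadj).2
  rcases (mk_eq_mk_iff (A * C) (C * A)).mp hcomm with h | h
  · -- C and A commute, so C = ±A, contradicting x ≠ z
    exfalso
    have hm : (C : Matrix (Fin 2) (Fin 2) F) * A = (A : Matrix (Fin 2) (Fin 2) F) * C := by
      have := congr_arg (fun M : SL2 => (M : Matrix (Fin 2) (Fin 2) F)) h
      simpa using this
    have hCA : (QuotientGroup.mk A : PSL(2,F)) = QuotientGroup.mk C :=
      (mk_eq_mk_iff A C).mpr (comm_traceless h2 A C tA tC hm)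
    exact (show x ≠ z ∧ _ from hadj).1 (Subtype.ext (by rw [← hA, ← hC, hCA]))
  · have := congr_arg (fun M : SL2 => (M : Matrix (Fin 2) (Fin 2) F)) h
    simpa using this

/-- For `q > 11` an odd prime power and `L = PSL(2,q)`, any two distinct vertices of the
commuting involution graph `C(L,X)` have at most one common neighbour; in particular
`C(L,X)` contains no 4-cycles. -/
theorem stmt_4 (q : ℕ) (hq : Odd q) (hq11 : 11 < q)
    (F : Type) [Field F] [Fintype F] (hF : Fintype.card F = q) :
    (∀ x y : {x : PSL(2, F) // x * x = 1 ∧ x ≠ 1}, x ≠ y →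
      {z | (commGraph (PSL(2, F))).Adj x z ∧ (commGraph (PSL(2, F))).Adj y z}.Subsingleton) ∧
    (∀ a b c d : {x : PSL(2, F) // x * x = 1 ∧ x ≠ 1},
      (commGraph (PSL(2, F))).Adj a b → (commGraph (PSL(2, F))).Adj b c →
      (commGraph (PSL(2, F))).Adj c d → (commGraph (PSL(2, F))).Adj d a →
      a ≠ c → b ≠ d → False) := by
  have h2 : (2:F) ≠ 0 := by
    intro h
    have hchar : CharP F (ringChar F) := ringChar.charP F
    have hp : (ringChar F).Prime := CharP.char_is_prime F (ringChar F)
    have hdvd : ringChar F ∣ 2 := ringChar.dvd h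
    have h2' : ringChar F = 2 := (Nat.prime_dvd_prime_iff_eq hp Nat.prime_two).mp hdvd
    haveI : CharP F 2 := h2' ▸ hchar
    obtain ⟨n, hn⟩ := FiniteField.card F 2
    rw [hF] at hn
    have : Even q := hn.2 ▸ (Nat.even_pow.mpr ⟨even_two, n.2.ne'⟩)
    exact (Nat.not_even_iff_odd.mpr hq) this
  have key : ∀ x y : {x : PSL(2, F) // x * x = 1 ∧ x ≠ 1}, x ≠ y →
      {z | (commGraph (PSL(2, F))).Adj x z ∧ (commGraph (PSL(2, F))).Adj y z}.Subsingleton := by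
    intro x y hxy z hz z' hz'
    obtain ⟨A, hA⟩ := QuotientGroup.mk_surjective x.1
    obtain ⟨B, hB⟩ := QuotientGroup.mk_surjective y.1
    obtain ⟨C, hC⟩ := QuotientGroup.mk_surjective z.1
    obtain ⟨C', hC'⟩ := QuotientGroup.mk_surjective z'.1
    have tA := (invol_lift h2 A (by rw [hA]; exact x.2.2) (by rw [hA]; exact x.2.1)).1
    have tB := (invol_lift h2 B (by rw [hB]; exact y.2.2) (by rw [hB]; exact y.2.1)).1
    have sqC := (invol_lift h2 C (by rw [hC]; exact z.2.2) (by rw [hC]; exact z.2.1)).2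
    have hCA := adj_anticomm h2 A C hA hC hz.1
    have hCB := adj_anticomm h2 B C hB hC hz.2
    have hC'A := adj_anticomm h2 A C' hA hC' hz'.1
    have hC'B := adj_anticomm h2 B C' hB hC' hz'.2
    obtain ⟨N, hNdef⟩ : ∃ N : Matrix (Fin 2) (Fin 2) F,
      N = (C : Matrix (Fin 2) (Fin 2) F) * C' := ⟨_, rfl⟩
    have hNA : N * A = (A : Matrix (Fin 2) (Fin 2) F) * N := by
      rw [hNdef, mul_assoc, hC'A, mul_neg, ← mul_assoc, hCA, neg_mul, neg_neg, mul_assoc]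
    have hNB : N * B = (B : Matrix (Fin 2) (Fin 2) F) * N := by
      rw [hNdef, mul_assoc, hC'B, mul_neg, ← mul_assoc, hCB, neg_mul, neg_neg, mul_assoc]
    obtain ⟨s, hsdef⟩ : ∃ s : F, s = N.trace / 2 := ⟨_, rfl⟩
    obtain ⟨N₀, hN0def⟩ : ∃ N₀ : Matrix (Fin 2) (Fin 2) F, N₀ = N - s • 1 := ⟨_, rfl⟩
    have htN0 : N₀.trace = 0 := by
      rw [hN0def, Matrix.trace_sub, Matrix.trace_smul, Matrix.trace_one, hsdef]
      simp only [smul_eq_mul, Fintype.card_fin]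
      field_simp
      norm_num
    have hN0A : N₀ * A = (A : Matrix (Fin 2) (Fin 2) F) * N₀ := by
      rw [hN0def, sub_mul, mul_sub, hNA, Matrix.smul_mul, Matrix.mul_smul, one_mul, mul_one]
    have hN0B : N₀ * B = (B : Matrix (Fin 2) (Fin 2) F) * N₀ := by
      rw [hN0def, sub_mul, mul_sub, hNB, Matrix.smul_mul, Matrix.mul_smul, one_mul, mul_one]
    obtain ⟨β, hβ⟩ := cent_lemma h2 _ _ tA (det_coe A) htN0 hN0A
    obtain ⟨β', hβ'⟩ := cent_lemma h2 _ _ tB (det_coe B) htN0 hN0B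
    by_cases hβ0 : β = 0
    · -- N is scalar : the two common neighbours coincide
      have hN : N = s • 1 := by
        have : N₀ = 0 := by rw [hβ, hβ0, zero_smul]
        rw [hN0def] at this
        exact sub_eq_zero.mp this
      have hdetN : s * s = 1 := by
        have h1 : N.det = 1 := by
          rw [hNdef, Matrix.det_mul, det_coe, det_coe, one_mul]
        rw [hN, Matrix.det_smul, Matrix.det_one] at h1
        simpa [Fintype.card_fin, sq] using h1
      have hCC' : C' = C ∨ C' = -C := by
        rcases mul_self_eq_one_iff.mp hdetN with hs | hs
        ·
          right
          have hN1 : (C : Matrix (Fin 2) (Fin 2) F) * C' = 1 := by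
            rw [← hNdef, hN, hs, one_smul]
          have : (C : Matrix (Fin 2) (Fin 2) F) * ((C : Matrix (Fin 2) (Fin 2) F) * C') =
              (C : Matrix (Fin 2) (Fin 2) F) := by rw [hN1, mul_one]
          rw [← mul_assoc, sqC, neg_one_mul] at this
          have h' : (C' : Matrix (Fin 2) (Fin 2) F) = -(C : Matrix (Fin 2) (Fin 2) F) :=
            neg_eq_iff_eq_neg.mp this
          exact Subtype.ext (by rw [h', Matrix.SpecialLinearGroup.coe_neg])
        · left
          have hN1 : (C : Matrix (Fin 2) (Fin 2) F) * C' = -1 := by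
            rw [← hNdef, hN, hs]
            ext i j; simp
          have : (C : Matrix (Fin 2) (Fin 2) F) * ((C : Matrix (Fin 2) (Fin 2) F) * C') =
              -(C : Matrix (Fin 2) (Fin 2) F) := by rw [hN1]; simp
          rw [← mul_assoc, sqC, neg_one_mul, neg_inj] at this
          exact Subtype.ext this
      have : (QuotientGroup.mk C : PSL(2,F)) = QuotientGroup.mk C' :=
        (mk_eq_mk_iff C C').mpr hCC'
      exact Subtype.ext (by rw [← hC, ← hC', this])
    · -- N₀ nonzero : then B = ±A, contradicting x ≠ y
      exfalso
      have heq : β • (A : Matrix (Fin 2) (Fin 2) F) = β' • (B : Matrix (Fin 2) (Fin 2) F) := by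
        rw [← hβ, ← hβ']
      have hβ'0 : β' ≠ 0 := by
        intro h0
        rw [h0, zero_smul, smul_eq_zero] at heq
        rcases heq with h | h
        · exact hβ0 h
        · exact coe_ne_zero A h
      have hBA : (B : Matrix (Fin 2) (Fin 2) F) = (β'⁻¹ * β) • A := by
        rw [mul_smul, heq, smul_smul, inv_mul_cancel₀ hβ'0, one_smul]
      have hcomm : (B : Matrix (Fin 2) (Fin 2) F) * A = (A : Matrix (Fin 2) (Fin 2) F) * B := by
        rw [hBA, Matrix.smul_mul, Matrix.mul_smul]
      have : (QuotientGroup.mk A : PSL(2,F)) = QuotientGroup.mk B :=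
        (mk_eq_mk_iff A B).mpr (comm_traceless h2 A B tA tB hcomm)
      exact hxy (Subtype.ext (by rw [← hA, ← hB, this]))
  refine ⟨key, ?_⟩
  intro a b c d hab hbc hcd hda hac hbd
  exact hbd (key a c hac ⟨hab, (commGraph (PSL(2,F))).adj_symm hbc⟩
    ⟨(commGraph (PSL(2,F))).adj_symm hda, hcd⟩)
end

section
/- Let q ≡ 3 (mod 4), q > 3, be a prime power, and let t ∈ PSL(2,q) be the involution represented by the matrix [[0,1],[-1,0]] over GF(q). Then the set of neighbours of t in the commuting involution graph, Δ_1(t), equals the set of elements of PSL(2,q) represented by matrices [[σ,τ],[τ,-σ]] with σ² + τ² = -1. -/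
open Matrix
open scoped MatrixGroups

section
variable {F : Type} [Field F]

instance : Fact (Even (Fintype.card (Fin 2))) := ⟨by simp⟩

lemma sl_coe_inj {a b : SpecialLinearGroup (Fin 2) F}
    (h : (a : Matrix (Fin 2) (Fin 2) F) = b) : a = b := Subtype.coe_injective h

lemma diag_neg_one : (Matrix.diagonal fun _ : Fin 2 => (-1 : F)) = -1 := by
  rw [← Matrix.diagonal_one, ← Matrix.diagonal_neg]

lemma psl_mk_eq_mk (h2 : (2 : F) ≠ 0)
    (a b : SpecialLinearGroup (Fin 2) F) :
    (↑a : PSL(2, F)) = ↑b ↔ a = b ∨ a = -b := by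
  rw [QuotientGroup.eq, Matrix.SpecialLinearGroup.mem_center_iff]
  constructor
  · rintro ⟨r, hr, hscal⟩
    simp only [Fintype.card_fin] at hr
    have hrr : r * r = 1 := by rw [← sq]; exact hr
    rcases mul_self_eq_one_iff.mp hrr with h | h
    · left
      have h1 : a⁻¹ * b = 1 := sl_coe_inj (by rw [← hscal, h]; simp)
      exact (inv_mul_eq_one.mp h1)
    · right
      have h1 : a⁻¹ * b = -1 := sl_coe_inj (by
        rw [← hscal, h]
        simp [Matrix.SpecialLinearGroup.coe_neg, Matrix.scalar_apply, diag_neg_one])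
      have hb : b = a * (-1) := by rw [← h1, mul_inv_cancel_left]
      rw [hb]
      apply sl_coe_inj
      simp [Matrix.SpecialLinearGroup.coe_neg]
  · rintro (rfl | rfl)
    · exact ⟨1, one_pow _, by simp⟩
    · refine ⟨-1, by simp [Fintype.card_fin], ?_⟩
      have h1 : (-b)⁻¹ * b = -1 := by
        apply sl_coe_inj
        have hinv : (-b)⁻¹ = -(b⁻¹) := by
          apply inv_eq_of_mul_eq_one_left
          apply sl_coe_inj
          simp [Matrix.SpecialLinearGroup.coe_neg]
        rw [hinv]
        simp [Matrix.SpecialLinearGroup.coe_neg]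
      rw [h1]
      simp [Matrix.SpecialLinearGroup.coe_neg, Matrix.scalar_apply, diag_neg_one]

lemma psl_mk_neg_eq (h2 : (2 : F) ≠ 0) (a : SpecialLinearGroup (Fin 2) F) :
    ((-a : SpecialLinearGroup (Fin 2) F) : PSL(2, F)) = ↑a :=
  (psl_mk_eq_mk h2 (-a) a).mpr (Or.inr rfl)

end

/-- For `q ≡ 3 (mod 4)`, `q > 3`, and `t ∈ PSL(2,q)` represented by `[[0,1],[-1,0]]`, the
neighbourhood `Δ₁(t)` of `t` in the commuting involution graph consists exactly of the
elements represented by matrices `[[σ,τ],[τ,-σ]]` with `σ² + τ² = -1`. -/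
theorem stmt_7 (q : ℕ) (hq1 : q % 4 = 3) (hq3 : 3 < q)
    (F : Type) [Field F] [Fintype F] (hF : Fintype.card F = q)
    (t : SpecialLinearGroup (Fin 2) F) (htm : (t : Matrix (Fin 2) (Fin 2) F) = !![0, 1; -1, 0])
    (ht : ((t : PSL(2, F)) * (t : PSL(2, F)) = 1 ∧ (t : PSL(2, F)) ≠ 1)) :
    (commGraph (PSL(2, F))).neighborSet ⟨(t : PSL(2, F)), ht⟩ =
      {y : {x : PSL(2, F) // x * x = 1 ∧ x ≠ 1} | ∃ σ τ : F, σ ^ 2 + τ ^ 2 = -1 ∧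
        ∃ m : SpecialLinearGroup (Fin 2) F,
          (m : Matrix (Fin 2) (Fin 2) F) = !![σ, τ; τ, -σ] ∧ (y : PSL(2, F)) = (m : PSL(2, F))} := by
  have hodd : Fintype.card F % 2 = 1 := by rw [hF]; omega
  have hchar : ringChar F ≠ 2 := by
    intro h
    have := FiniteField.even_card_iff_char_two.mp h
    omega
  have h2 : (2 : F) ≠ 0 := Ring.two_ne_zero hchar
  ext y
  simp only [SimpleGraph.mem_neighborSet, Set.mem_setOf_eq]
  show ((⟨(t : PSL(2, F)), ht⟩ : {x : PSL(2, F) // x * x = 1 ∧ x ≠ 1}) ≠ y ∧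
      (t : PSL(2, F)) * (y : PSL(2, F)) = (y : PSL(2, F)) * (t : PSL(2, F))) ↔ _
  constructor
  · rintro ⟨hne, hcomm⟩
    obtain ⟨n, hn⟩ := QuotientGroup.mk_surjective (y : PSL(2, F))
    set a := (n : Matrix (Fin 2) (Fin 2) F) 0 0 with ha
    set b := (n : Matrix (Fin 2) (Fin 2) F) 0 1 with hb
    set c := (n : Matrix (Fin 2) (Fin 2) F) 1 0 with hc
    set d := (n : Matrix (Fin 2) (Fin 2) F) 1 1 with hd
    have hN : (n : Matrix (Fin 2) (Fin 2) F) = !![a, b; c, d] := Matrix.eta_fin_two _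
    have hdet : a * d - b * c = 1 := by
      have := n.property
      rw [hN, Matrix.det_fin_two_of] at this
      exact this
    have hy2 : (↑(n * n) : PSL(2, F)) = ↑(1 : SpecialLinearGroup (Fin 2) F) := by
      rw [QuotientGroup.mk_mul, hn, QuotientGroup.mk_one]
      exact y.2.1
    have hy1 : (y : PSL(2, F)) ≠ 1 := y.2.2
    have hct : (↑(t * n) : PSL(2, F)) = ↑(n * t) := by
      rw [QuotientGroup.mk_mul, QuotientGroup.mk_mul, hn]
      exact hcomm
    rcases (psl_mk_eq_mk h2 _ _).mp hct with hce | hce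
    · -- t and n commute in SL: contradiction
      exfalso
      have hM := congrArg Subtype.val hce
      simp only [Matrix.SpecialLinearGroup.coe_mul] at hM
      rw [htm, hN, Matrix.mul_fin_two, Matrix.mul_fin_two] at hM
      have e00 : c = -b := by
        have := congrArg (fun M => M 0 0) hM; simp at this; linear_combination this
      have e01 : d = a := by
        have := congrArg (fun M => M 0 1) hM; simp at this; linear_combination this
      rcases (psl_mk_eq_mk h2 _ _).mp hy2 with hnn | hnn
      · -- n² = 1 → n = ±1 → y = 1
        have hM2 := congrArg Subtype.val hnn
        simp only [Matrix.SpecialLinearGroup.coe_mul, Matrix.SpecialLinearGroup.coe_one] at hM2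
        rw [hN, Matrix.mul_fin_two] at hM2
        have f00 : a * a + b * c = 1 := by
          have := congrArg (fun M => M 0 0) hM2
          simpa [Matrix.one_apply] using this
        have hb0 : b = 0 := by
          have hbb : b * b = 0 := by
            have h' : 2 * (b * b) = 0 := by
              linear_combination hdet - f00 + 2 * b * e00 - a * e01
            exact (mul_eq_zero.mp h').resolve_left h2
          exact mul_self_eq_zero.mp hbb
        have hc0 : c = 0 := by rw [e00, hb0, neg_zero]
        have ha1 : a * a = 1 := by
          linear_combination hdet - a * e01 + b * e00 - b * hb0
        rcases mul_self_eq_one_iff.mp ha1 with h | h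
        · have hd1 : d = 1 := by rw [e01, h]
          have hone : n = 1 := sl_coe_inj (by
            rw [hN, hb0, hc0, hd1, h]
            ext i j
            fin_cases i <;> fin_cases j <;> simp [Matrix.one_apply])
          apply hy1
          rw [← hn, hone, QuotientGroup.mk_one]
        · have hd1 : d = -1 := by rw [e01, h]
          have hone : n = -1 := sl_coe_inj (by
            rw [hN, hb0, hc0, hd1, h, Matrix.SpecialLinearGroup.coe_neg,
              Matrix.SpecialLinearGroup.coe_one]
            ext i j
            fin_cases i <;> fin_cases j <;> simp [Matrix.one_apply])
          apply hy1
          rw [← hn, hone, psl_mk_neg_eq h2, QuotientGroup.mk_one]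
      · -- n² = -1 → n = ±t → y = t
        have hM2 := congrArg Subtype.val hnn
        simp only [Matrix.SpecialLinearGroup.coe_mul, Matrix.SpecialLinearGroup.coe_neg,
          Matrix.SpecialLinearGroup.coe_one] at hM2
        rw [hN, Matrix.mul_fin_two] at hM2
        have f00 : a * a + b * c = -1 := by
          have := congrArg (fun M => M 0 0) hM2
          simpa [Matrix.neg_apply, Matrix.one_apply] using this
        have ha0 : a = 0 := by
          have haa : a * a = 0 := by
            have h' : 2 * (a * a) = 0 := by
              linear_combination hdet + f00 - a * e01
            exact (mul_eq_zero.mp h').resolve_left h2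
          exact mul_self_eq_zero.mp haa
        have hd0 : d = 0 := by rw [e01, ha0]
        have hb1 : b * b = 1 := by
          linear_combination hdet - a * e01 + b * e00 - a * ha0
        apply hne
        apply Subtype.ext
        show (t : PSL(2, F)) = (y : PSL(2, F))
        rw [← hn]
        rcases mul_self_eq_one_iff.mp hb1 with h | h
        · have hc1 : c = -1 := by rw [e00, h]
          have hone : n = t := sl_coe_inj (by rw [hN, ha0, hd0, hc1, h, htm])
          rw [hone]
        · have hc1 : c = 1 := by rw [e00, h, neg_neg]
          have hone : n = -t := sl_coe_inj (by
            rw [hN, ha0, hd0, hc1, h, Matrix.SpecialLinearGroup.coe_neg, htm]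
            ext i j
            fin_cases i <;> fin_cases j <;> simp)
          rw [hone, psl_mk_neg_eq h2]
    · -- anticommute
      have hM := congrArg Subtype.val hce
      simp only [Matrix.SpecialLinearGroup.coe_mul, Matrix.SpecialLinearGroup.coe_neg] at hM
      rw [htm, hN, Matrix.mul_fin_two, Matrix.mul_fin_two] at hM
      have e00 : c = b := by
        have := congrArg (fun M => M 0 0) hM; simp at this; linear_combination this
      have e01 : d = -a := by
        have := congrArg (fun M => M 0 1) hM; simp at this; linear_combination this
      refine ⟨a, b, ?_, n, ?_, hn.symm⟩
      · linear_combination -hdet - b * e00 + a * e01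
      · rw [hN, e00, e01]
  · rintro ⟨σ, τ, hστ, m, hm, hy⟩
    constructor
    · intro h
      have hval : (t : PSL(2, F)) = (y : PSL(2, F)) := congrArg Subtype.val h
      rw [hy] at hval
      rcases (psl_mk_eq_mk h2 _ _).mp hval with h' | h'
      · have hmat : (!![0, 1; -1, 0] : Matrix (Fin 2) (Fin 2) F) = !![σ, τ; τ, -σ] := by
          rw [← htm, ← hm, h']
        have h1 : (1 : F) = τ := by
          have := congrArg (fun M => M 0 1) hmat; simpa using this
        have h2' : (-1 : F) = τ := by
          have := congrArg (fun M => M 1 0) hmat; simpa using this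
        exact h2 (by linear_combination h1 - h2')
      · have hmat : (!![0, 1; -1, 0] : Matrix (Fin 2) (Fin 2) F) = -(!![σ, τ; τ, -σ]) := by
          rw [← htm, ← hm, ← Matrix.SpecialLinearGroup.coe_neg, h']
        have h1 : (1 : F) = -τ := by
          have := congrArg (fun M => M 0 1) hmat; simpa using this
        have h2' : (-1 : F) = -τ := by
          have := congrArg (fun M => M 1 0) hmat; simpa using this
        exact h2 (by linear_combination h1 - h2')
    · rw [hy]
      show (↑t : PSL(2, F)) * ↑m = ↑m * ↑t
      rw [← QuotientGroup.mk_mul, ← QuotientGroup.mk_mul]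
      apply (psl_mk_eq_mk h2 _ _).mpr
      right
      apply sl_coe_inj
      rw [Matrix.SpecialLinearGroup.coe_neg]
      show (t : Matrix (Fin 2) (Fin 2) F) * m = -((m : Matrix (Fin 2) (Fin 2) F) * t)
      rw [htm, hm, Matrix.mul_fin_two, Matrix.mul_fin_two]
      ext i j
      fin_cases i <;> fin_cases j <;> simp <;> ring
end

section
/- Let q ≡ 1 (mod 4) be a prime power, ι ∈ GF(q) with ι² = -1, and let t, s be the involutions of PSL(2,q) represented by diag(ι,-ι) and [[0,1],[-1,0]] respectively. Then Δ_1(s) ∩ Δ_2(t) consists exactly of the elements represented by [[σ,τ],[τ,-σ]] with σ, τ both nonzero and σ² + τ² = -1. -/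
open Matrix
open scoped MatrixGroups

lemma mat2_eq_iff {F : Type} [Field F] (a b c d e f g h : F) :
    (!![a,b;c,d] : Matrix (Fin 2) (Fin 2) F) = !![e,f;g,h] ↔ (a=e∧b=f∧c=g∧d=h) := by
  rw [← Matrix.ext_iff]; simp [Fin.forall_fin_two]; tauto

lemma neg_mat2 {F : Type} [Field F] (a b c d : F) :
    -(!![a,b;c,d] : Matrix (Fin 2) (Fin 2) F) = !![-a,-b;-c,-d] := by
  rw [← Matrix.ext_iff]; simp [Fin.forall_fin_two]

lemma scalar_eq_smul {F : Type} [Field F] (r : F) :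
    (Matrix.scalar (Fin 2)) r = r • (1 : Matrix (Fin 2) (Fin 2) F) := by
  rw [Matrix.scalar_apply, Matrix.smul_one_eq_diagonal]

lemma psl_eq_iff {F : Type} [Field F] (A B : SpecialLinearGroup (Fin 2) F) :
    (A : PSL(2,F)) = (B : PSL(2,F)) ↔
      (B : Matrix (Fin 2) (Fin 2) F) = A ∨ (B : Matrix (Fin 2) (Fin 2) F) = -A := by
  rw [QuotientGroup.eq, Matrix.SpecialLinearGroup.mem_center_iff]
  have hdet : (A : Matrix (Fin 2) (Fin 2) F).det = 1 := A.prop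
  have hcoe : ((A⁻¹ * B : SpecialLinearGroup (Fin 2) F) : Matrix (Fin 2) (Fin 2) F)
      = adjugate (A : Matrix (Fin 2) (Fin 2) F) * B := by
    rw [Matrix.SpecialLinearGroup.coe_mul, Matrix.SpecialLinearGroup.coe_inv]
  constructor
  · rintro ⟨r, hr, hscal⟩
    have hr2 : r ^ 2 = 1 := by simpa using hr
    rw [hcoe, scalar_eq_smul] at hscal
    have hB : (B : Matrix (Fin 2) (Fin 2) F) = r • A := by
      calc (B : Matrix (Fin 2) (Fin 2) F)
          = ((A : Matrix (Fin 2) (Fin 2) F) * adjugate (A : Matrix (Fin 2) (Fin 2) F)) * B := by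
            rw [Matrix.mul_adjugate, hdet, one_smul, Matrix.one_mul]
      _ = (A : Matrix (Fin 2) (Fin 2) F) * (adjugate (A : Matrix (Fin 2) (Fin 2) F) * B) := by
            rw [Matrix.mul_assoc]
      _ = (A : Matrix (Fin 2) (Fin 2) F) * (r • 1) := by rw [hscal]
      _ = r • (A : Matrix (Fin 2) (Fin 2) F) := by simp
    have : (r - 1) * (r + 1) = 0 := by linear_combination hr2
    rcases mul_eq_zero.mp this with h | h
    · left; rw [hB, sub_eq_zero.mp h, one_smul]
    · right; rw [hB, eq_neg_of_add_eq_zero_left h]; simp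
  · intro h
    have key : ∀ r : F, (B : Matrix (Fin 2) (Fin 2) F) = r • A →
        (Matrix.scalar (Fin 2)) r
          = ((A⁻¹ * B : SpecialLinearGroup (Fin 2) F) : Matrix (Fin 2) (Fin 2) F) := by
      intro r hB
      rw [hcoe, hB, scalar_eq_smul, Matrix.mul_smul, Matrix.adjugate_mul, hdet, one_smul]
    rcases h with h | h
    · exact ⟨1, one_pow _, key 1 (by rw [h, one_smul])⟩
    · exact ⟨-1, by norm_num, key (-1) (by rw [h]; simp)⟩

lemma sl_sq_eq_one {F : Type} [Field F] (h2 : (2:F) ≠ 0) (M : SpecialLinearGroup (Fin 2) F)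
    (h : (M : Matrix (Fin 2) (Fin 2) F) * M = 1) :
    (M : Matrix (Fin 2) (Fin 2) F) = 1 ∨ (M : Matrix (Fin 2) (Fin 2) F) = -1 := by
  have hdet : (M : Matrix (Fin 2) (Fin 2) F).det = 1 := M.prop
  set a := (M : Matrix (Fin 2) (Fin 2) F) 0 0 with ha
  set b := (M : Matrix (Fin 2) (Fin 2) F) 0 1 with hb
  set c := (M : Matrix (Fin 2) (Fin 2) F) 1 0 with hc
  set d := (M : Matrix (Fin 2) (Fin 2) F) 1 1 with hd
  have heta : (M : Matrix (Fin 2) (Fin 2) F) = !![a,b;c,d] := Matrix.eta_fin_two _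
  rw [heta, Matrix.det_fin_two_of] at hdet
  rw [heta, Matrix.mul_fin_two, Matrix.one_fin_two, mat2_eq_iff] at h
  obtain ⟨h11, h12, h21, h22⟩ := h
  by_cases had : a + d = 0
  · exfalso
    exact h2 (by linear_combination - h11 - hdet + a * had)
  · have hb0 : b = 0 := by
      rcases mul_eq_zero.mp (show b * (a + d) = 0 by linear_combination h12) with h | h
      · exact h
      · exact absurd h had
    have hc0 : c = 0 := by
      rcases mul_eq_zero.mp (show c * (a + d) = 0 by linear_combination h21) with h | h
      · exact h
      · exact absurd h had
    have ha1 : a * a = 1 := by rw [hb0] at h11; linear_combination h11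
    have hda : d = a := by
      have hane : a ≠ 0 := fun h0 => by rw [h0] at ha1; simp at ha1
      have h1 : a * d = 1 := by linear_combination hdet + c * hb0
      have h2' : a * d = a * a := by rw [h1, ha1]
      exact mul_left_cancel₀ hane h2'
    rcases mul_eq_zero.mp (show (a-1)*(a+1) = 0 by linear_combination ha1) with h | h
    · left; rw [heta, Matrix.one_fin_two, mat2_eq_iff]
      have : a = 1 := by linear_combination h
      exact ⟨this, hb0, hc0, by rw [hda]; exact this⟩
    · right; rw [heta, Matrix.one_fin_two, neg_mat2, mat2_eq_iff]
      have : a = -1 := by linear_combination h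
      exact ⟨this, by simp [hb0], by simp [hc0], by rw [hda]; exact this⟩

/-- For `q ≡ 1 (mod 4)`, `ι² = -1`, `t = diag(ι,-ι)` and `s = [[0,1],[-1,0]]` in `PSL(2,q)`,
the set `Δ₁(s) ∩ Δ₂(t)` consists exactly of the elements represented by matrices
`[[σ,τ],[τ,-σ]]` with `σ, τ ≠ 0` and `σ² + τ² = -1`. -/
theorem stmt_8 (q : ℕ) (hq1 : q % 4 = 1) (hq3 : 3 < q)
    (F : Type) [Field F] [Fintype F] (hF : Fintype.card F = q)
    (ι : F) (hι : ι ^ 2 = -1)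
    (t s : SpecialLinearGroup (Fin 2) F)
    (htm : (t : Matrix (Fin 2) (Fin 2) F) = !![ι, 0; 0, -ι])
    (hsm : (s : Matrix (Fin 2) (Fin 2) F) = !![0, 1; -1, 0])
    (ht : ((t : PSL(2, F)) * (t : PSL(2, F)) = 1 ∧ (t : PSL(2, F)) ≠ 1))
    (hs : ((s : PSL(2, F)) * (s : PSL(2, F)) = 1 ∧ (s : PSL(2, F)) ≠ 1)) :
    (commGraph (PSL(2, F))).neighborSet ⟨(s : PSL(2, F)), hs⟩ ∩
      {y : {x : PSL(2, F) // x * x = 1 ∧ x ≠ 1} |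
        (commGraph (PSL(2, F))).dist ⟨(t : PSL(2, F)), ht⟩ y = 2} =
      {y : {x : PSL(2, F) // x * x = 1 ∧ x ≠ 1} | ∃ σ τ : F, σ ≠ 0 ∧ τ ≠ 0 ∧
        σ ^ 2 + τ ^ 2 = -1 ∧
        ∃ m : SpecialLinearGroup (Fin 2) F,
          (m : Matrix (Fin 2) (Fin 2) F) = !![σ, τ; τ, -σ] ∧ (y : PSL(2, F)) = (m : PSL(2, F))} := by
  -- characteristic facts
  have hchar : ringChar F ≠ 2 := by
    intro h
    have := (FiniteField.even_card_iff_char_two (F := F)).mp h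
    rw [hF] at this
    omega
  have h2 : (2:F) ≠ 0 := Ring.two_ne_zero hchar
  have hneg : (-1:F) ≠ 1 := Ring.neg_one_ne_one_of_char_ne_two hchar
  have hι0 : ι ≠ 0 := by
    intro h; rw [h] at hι
    exact one_ne_zero (show (1:F) = 0 by linear_combination hι)
  -- adjacency between t and s
  have hts_ne : (t : PSL(2,F)) ≠ (s : PSL(2,F)) := by
    intro h
    rcases (psl_eq_iff t s).mp h with h' | h' <;>
      rw [htm, hsm] at h'
    · rw [mat2_eq_iff] at h'; exact one_ne_zero h'.2.1
    · rw [neg_mat2, mat2_eq_iff] at h'; exact one_ne_zero (by linear_combination h'.2.1)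
  have hts_comm : (t : PSL(2,F)) * (s : PSL(2,F)) = (s : PSL(2,F)) * (t : PSL(2,F)) := by
    rw [← QuotientGroup.mk_mul, ← QuotientGroup.mk_mul]
    rw [psl_eq_iff, Matrix.SpecialLinearGroup.coe_mul, Matrix.SpecialLinearGroup.coe_mul]
    right
    rw [htm, hsm, Matrix.mul_fin_two, Matrix.mul_fin_two, neg_mat2, mat2_eq_iff]
    refine ⟨by ring, by ring, by ring, by ring⟩
  have hAdjTS : (commGraph (PSL(2,F))).Adj ⟨(t : PSL(2,F)), ht⟩ ⟨(s : PSL(2,F)), hs⟩ :=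
    ⟨fun h => hts_ne (congrArg Subtype.val h), hts_comm⟩
  ext y
  simp only [Set.mem_inter_iff, SimpleGraph.mem_neighborSet, Set.mem_setOf_eq]
  constructor
  · rintro ⟨⟨hne, hcomm⟩, hdist⟩
    obtain ⟨B, hB⟩ := QuotientGroup.mk_surjective (y : PSL(2,F))
    -- B squares to -1
    have hBB : (B : Matrix (Fin 2) (Fin 2) F) * B = -1 := by
      have h1 : ((1 : SpecialLinearGroup (Fin 2) F) : PSL(2,F))
          = ((B * B : SpecialLinearGroup (Fin 2) F) : PSL(2,F)) := by
        rw [QuotientGroup.mk_mul, hB, y.prop.1, QuotientGroup.mk_one]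
      rcases (psl_eq_iff 1 (B*B)).mp h1 with h | h
      · exfalso
        have hsq : (B : Matrix (Fin 2) (Fin 2) F) * B = 1 := by
          rw [← Matrix.SpecialLinearGroup.coe_mul]
          rw [Matrix.SpecialLinearGroup.coe_mul] at h
          rw [Matrix.SpecialLinearGroup.coe_mul]
          simpa using h
        rcases sl_sq_eq_one h2 B hsq with h' | h'
        · have : ((1 : SpecialLinearGroup (Fin 2) F) : PSL(2,F)) = (B : PSL(2,F)) :=
            (psl_eq_iff 1 B).mpr (Or.inl (by simpa using h'))
          rw [hB, QuotientGroup.mk_one] at this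
          exact y.prop.2 this.symm
        · have : ((1 : SpecialLinearGroup (Fin 2) F) : PSL(2,F)) = (B : PSL(2,F)) :=
            (psl_eq_iff 1 B).mpr (Or.inr (by simpa using h'))
          rw [hB, QuotientGroup.mk_one] at this
          exact y.prop.2 this.symm
      · rw [← Matrix.SpecialLinearGroup.coe_mul]
        simpa using h
    have hdetB : (B : Matrix (Fin 2) (Fin 2) F) 0 0 * (B : Matrix (Fin 2) (Fin 2) F) 1 1
        - (B : Matrix (Fin 2) (Fin 2) F) 0 1 * (B : Matrix (Fin 2) (Fin 2) F) 1 0 = 1 := by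
      have := B.prop
      rw [Matrix.det_fin_two] at this
      exact this
    obtain ⟨a, b, c, d, heta, hdet2⟩ :
        ∃ a b c d : F, (B : Matrix (Fin 2) (Fin 2) F) = !![a,b;c,d] ∧ a*d - b*c = 1 :=
      ⟨_, _, _, _, Matrix.eta_fin_two _, hdetB⟩
    -- commuting with s
    have hcomm' : ((B * s : SpecialLinearGroup (Fin 2) F) : PSL(2,F))
        = ((s * B : SpecialLinearGroup (Fin 2) F) : PSL(2,F)) := by
      rw [QuotientGroup.mk_mul, QuotientGroup.mk_mul, hB]; exact hcomm.symm
    rw [heta, Matrix.mul_fin_two] at hBB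
    rw [show (-1 : Matrix (Fin 2) (Fin 2) F) = !![(-1:F),0;0,-1] by
        rw [← Matrix.ext_iff]; simp [Fin.forall_fin_two], mat2_eq_iff] at hBB
    rcases (psl_eq_iff (s*B) (B*s)).mp hcomm'.symm with hx | hx
    · -- B commutes with s in SL: leads to contradiction
      exfalso
      rw [Matrix.SpecialLinearGroup.coe_mul, Matrix.SpecialLinearGroup.coe_mul, hsm, heta,
        Matrix.mul_fin_two, Matrix.mul_fin_two, mat2_eq_iff] at hx
      have hcb : c = -b := by linear_combination -hx.1
      have hda : d = a := by linear_combination -hx.2.1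
      have e2ab : (2:F) * (a * b) = 0 := by linear_combination hBB.2.1 - b * hda
      rcases mul_eq_zero.mp e2ab with h' | h'
      · exact h2 h'
      rcases mul_eq_zero.mp h' with ha0 | hb0
      · -- a = 0 : B = ±S, contradicting hne
        have hbb1 : b * b = 1 := by linear_combination hdet2 - d * ha0 + b * hcb
        have hseq : (s : PSL(2,F)) = (y : PSL(2,F)) := by
          rw [← hB]
          apply (psl_eq_iff s B).mpr
          rcases mul_eq_zero.mp (show (b-1)*(b+1) = 0 by linear_combination hbb1) with h' | h'
          · left
            rw [heta, hsm, mat2_eq_iff]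
            have hb1 : b = 1 := by linear_combination h'
            exact ⟨ha0, hb1, by linear_combination hcb - hb1, by linear_combination hda + ha0⟩
          · right
            rw [heta, hsm, neg_mat2, mat2_eq_iff]
            have hb1 : b = -1 := by linear_combination h'
            exact ⟨by linear_combination ha0, by linear_combination hb1,
              by linear_combination hcb - hb1, by linear_combination hda + ha0⟩
        exact hne (Subtype.ext hseq)
      · -- b = 0 : a² = -1 and a² = 1
        have e1 : a * a = -1 := by linear_combination hBB.1 - c * hb0
        have e2 : a * a = 1 := by linear_combination hdet2 - a * hda + c * hb0
        exact hneg (by linear_combination e2 - e1)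
    · -- B anticommutes with s : B = [[a,b],[b,-a]]
      rw [Matrix.SpecialLinearGroup.coe_mul, Matrix.SpecialLinearGroup.coe_mul, hsm, heta,
        Matrix.mul_fin_two, Matrix.mul_fin_two, neg_mat2, mat2_eq_iff] at hx
      have hcb : c = b := by linear_combination hx.1
      have hda : d = -a := by linear_combination hx.2.1
      have hστ : a ^ 2 + b ^ 2 = -1 := by
        linear_combination -hdet2 + a * hda - b * hcb
      have heta' : (B : Matrix (Fin 2) (Fin 2) F) = !![a, b; b, -a] := by
        rw [heta, mat2_eq_iff]; exact ⟨rfl, rfl, hcb, hda⟩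
      -- τ ≠ 0 since dist t y = 2 ≠ 0
      have hτ : b ≠ 0 := by
        intro hb0
        have ha2 : a * a = -1 := by linear_combination hστ - b * hb0
        have hfac : (a - ι) * (a + ι) = 0 := by linear_combination ha2 - hι
        have hteq : (t : PSL(2,F)) = (y : PSL(2,F)) := by
          rw [← hB]
          apply (psl_eq_iff t B).mpr
          rcases mul_eq_zero.mp hfac with h' | h'
          · left
            rw [heta', htm, mat2_eq_iff]
            have : a = ι := by linear_combination h'
            exact ⟨this, hb0, hb0, by rw [this]⟩
          · right
            rw [heta', htm, neg_mat2, mat2_eq_iff]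
            have : a = -ι := by linear_combination h'
            exact ⟨this, by linear_combination hb0, by linear_combination hb0,
              by rw [this]⟩
        have : (⟨(t : PSL(2,F)), ht⟩ : {x : PSL(2,F) // x * x = 1 ∧ x ≠ 1}) = y :=
          Subtype.ext hteq
        rw [← this, SimpleGraph.dist_self] at hdist
        exact absurd hdist (by norm_num)
      -- σ ≠ 0 since dist t y = 2 ≠ 1
      have hσ : a ≠ 0 := by
        intro ha0
        have hadj : (commGraph (PSL(2,F))).Adj ⟨(t : PSL(2,F)), ht⟩ y := by
          constructor
          · intro hEq
            have h' : (t : PSL(2,F)) = (y : PSL(2,F)) := Subtype.ext_iff.mp hEq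
            rw [← hB] at h'
            rcases (psl_eq_iff t B).mp h' with h'' | h'' <;>
              rw [heta', htm] at h''
            · rw [mat2_eq_iff] at h''; exact hι0 (by linear_combination ha0 - h''.1)
            · rw [neg_mat2, mat2_eq_iff] at h''
              exact hι0 (by linear_combination h''.1 - ha0)
          · rw [← hB, ← QuotientGroup.mk_mul, ← QuotientGroup.mk_mul]
            apply (psl_eq_iff (t * B) (B * t)).mpr
            right
            rw [Matrix.SpecialLinearGroup.coe_mul, Matrix.SpecialLinearGroup.coe_mul, htm, heta',
              Matrix.mul_fin_two, Matrix.mul_fin_two, neg_mat2, mat2_eq_iff]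
            refine ⟨by linear_combination (2*ι) * ha0, by ring, by ring,
              by linear_combination (2*ι) * ha0⟩
        have := (SimpleGraph.dist_eq_one_iff_adj (G := commGraph (PSL(2,F)))).mpr hadj
        rw [hdist] at this
        exact absurd this (by norm_num)
      exact ⟨a, b, hσ, hτ, hστ, B, heta', hB.symm⟩
  · rintro ⟨σ, τ, hσ, hτ, hστ, m, hm, hy⟩
    have hsy_ne : (⟨(s : PSL(2,F)), hs⟩ : {x : PSL(2,F) // x * x = 1 ∧ x ≠ 1}) ≠ y := by
      intro h
      have h' : (s : PSL(2,F)) = (y : PSL(2,F)) := Subtype.ext_iff.mp h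
      rw [hy] at h'
      rcases (psl_eq_iff s m).mp h' with h'' | h'' <;> rw [hsm, hm] at h''
      · rw [mat2_eq_iff] at h''; exact hσ h''.1
      · rw [neg_mat2, mat2_eq_iff] at h''; exact hσ (by linear_combination h''.1)
    have hsy_comm : (s : PSL(2,F)) * (y : PSL(2,F)) = (y : PSL(2,F)) * (s : PSL(2,F)) := by
      rw [hy, ← QuotientGroup.mk_mul, ← QuotientGroup.mk_mul]
      apply (psl_eq_iff (s * m) (m * s)).mpr
      right
      rw [Matrix.SpecialLinearGroup.coe_mul, Matrix.SpecialLinearGroup.coe_mul, hsm, hm,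
        Matrix.mul_fin_two, Matrix.mul_fin_two, neg_mat2, mat2_eq_iff]
      exact ⟨by ring, by ring, by ring, by ring⟩
    have hAdjSY : (commGraph (PSL(2,F))).Adj ⟨(s : PSL(2,F)), hs⟩ y := ⟨hsy_ne, hsy_comm⟩
    refine ⟨hAdjSY, ?_⟩
    let w : (commGraph (PSL(2,F))).Walk ⟨(t : PSL(2,F)), ht⟩ y :=
      SimpleGraph.Walk.cons hAdjTS (SimpleGraph.Walk.cons hAdjSY SimpleGraph.Walk.nil)
    have hle : (commGraph (PSL(2,F))).dist ⟨(t : PSL(2,F)), ht⟩ y ≤ 2 := by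
      have h := SimpleGraph.dist_le w
      have hw : w.length = 2 := rfl
      rw [hw] at h
      exact h
    have hty_ne : (⟨(t : PSL(2,F)), ht⟩ : {x : PSL(2,F) // x * x = 1 ∧ x ≠ 1}) ≠ y := by
      intro h
      have h' : (t : PSL(2,F)) = (y : PSL(2,F)) := Subtype.ext_iff.mp h
      rw [hy] at h'
      rcases (psl_eq_iff t m).mp h' with h'' | h'' <;> rw [htm, hm] at h''
      · rw [mat2_eq_iff] at h''; exact hτ h''.2.1
      · rw [neg_mat2, mat2_eq_iff] at h''; exact hτ (by linear_combination h''.2.1)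
    have h0 : (commGraph (PSL(2,F))).dist ⟨(t : PSL(2,F)), ht⟩ y ≠ 0 := by
      intro h0
      rcases (SimpleGraph.dist_eq_zero_iff_eq_or_not_reachable).mp h0 with h | h
      · exact hty_ne h
      · exact h ⟨w⟩
    have h1 : ¬ (commGraph (PSL(2,F))).Adj ⟨(t : PSL(2,F)), ht⟩ y := by
      rintro ⟨-, hc⟩
      rw [hy, ← QuotientGroup.mk_mul, ← QuotientGroup.mk_mul] at hc
      rcases (psl_eq_iff (t * m) (m * t)).mp hc with hx | hx <;>
        rw [Matrix.SpecialLinearGroup.coe_mul, Matrix.SpecialLinearGroup.coe_mul, htm, hm,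
          Matrix.mul_fin_two, Matrix.mul_fin_two] at hx
      · rw [mat2_eq_iff] at hx
        have e : (2:F) * (ι * τ) = 0 := by linear_combination -hx.2.1
        rcases mul_eq_zero.mp e with h' | h'
        · exact h2 h'
        · rcases mul_eq_zero.mp h' with h'' | h''
          · exact hι0 h''
          · exact hτ h''
      · rw [neg_mat2, mat2_eq_iff] at hx
        have e : (2:F) * (ι * σ) = 0 := by linear_combination hx.1
        rcases mul_eq_zero.mp e with h' | h'
        · exact h2 h'
        · rcases mul_eq_zero.mp h' with h'' | h''
          · exact hι0 h''
          · exact hσ h''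
    have hd1 : (commGraph (PSL(2,F))).dist ⟨(t : PSL(2,F)), ht⟩ y ≠ 1 := by
      intro h
      exact h1 ((SimpleGraph.dist_eq_one_iff_adj (G := commGraph (PSL(2,F)))).mp h)
    omega
end

section
/- Let q ≡ 1 (mod 4) be a prime power, t = diag(ι,-ι) with ι² = -1, t_ω = [[0,ω],[-1/ω,0]] ∈ Δ_1(t) for ω ≠ 0, and s_{σ,τ} = [[σ,τ],[τ,-σ]] with σ,τ ≠ 0 and σ² + τ² = -1 (so s_{σ,τ} ∈ Δ_2(t)). Then the product t_ω · s_{σ,τ} has two distinct eigenvalues if and only if ω⁴ - (2 + 4/τ²)ω² + 1 is a nonzero square in GF(q). -/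
open Matrix Polynomial
open scoped MatrixGroups

theorem aux_root_iff (F : Type) [Field F] (ω σ τ a : F) (hω : ω ≠ 0) :
    ((!![0, ω; -1/ω, 0] * !![σ, τ; τ, -σ] : Matrix (Fin 2) (Fin 2) F)).charpoly.IsRoot a ↔
    a^2 - (ω*τ - τ/ω)*a + (σ^2 + τ^2) * -1 = 0 := by
  simp [Matrix.charpoly, Matrix.det_fin_two, Matrix.mul_apply, Fin.sum_univ_two, charmatrix, IsRoot]
  constructor <;> intro h
  · linear_combination h + (τ^2+σ^2)*(mul_inv_cancel₀ hω)
  · linear_combination h - (τ^2+σ^2)*(mul_inv_cancel₀ hω)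

/-- For `q ≡ 1 (mod 4)`, with `t_ω = [[0,ω],[-1/ω,0]]` (`ω ≠ 0`) and
`s_{σ,τ} = [[σ,τ],[τ,-σ]]` (`σ,τ ≠ 0`, `σ² + τ² = -1`), the product `t_ω · s_{σ,τ}` has two
distinct eigenvalues if and only if `ω⁴ - (2 + 4/τ²)ω² + 1` is a nonzero square in `GF(q)`. -/
theorem stmt_9 (q : ℕ) (hq1 : q % 4 = 1) (hq3 : 3 < q)
    (F : Type) [Field F] [Fintype F] (hF : Fintype.card F = q)
    (ι : F) (hι : ι ^ 2 = -1)
    (ω σ τ : F) (hω : ω ≠ 0) (hσ : σ ≠ 0) (hτ : τ ≠ 0) (hστ : σ ^ 2 + τ ^ 2 = -1) :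
    (∃ a b : F, a ≠ b ∧
        ((!![0, ω; -1/ω, 0] * !![σ, τ; τ, -σ] : Matrix (Fin 2) (Fin 2) F)).charpoly.IsRoot a ∧
        ((!![0, ω; -1/ω, 0] * !![σ, τ; τ, -σ] : Matrix (Fin 2) (Fin 2) F)).charpoly.IsRoot b) ↔
      (∃ c : F, c ≠ 0 ∧ ω ^ 4 - (2 + 4 / τ ^ 2) * ω ^ 2 + 1 = c ^ 2) := by
  have h2 : (2 : F) ≠ 0 := by
    refine Ring.two_ne_zero ?_
    intro hchar
    have := (FiniteField.even_card_iff_char_two (F := F)).mp hchar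
    rw [hF] at this
    omega
  obtain ⟨T, hT⟩ : ∃ T : F, T = ω * τ - τ / ω := ⟨_, rfl⟩
  have hroot : ∀ a : F,
      ((!![0, ω; -1/ω, 0] * !![σ, τ; τ, -σ] : Matrix (Fin 2) (Fin 2) F)).charpoly.IsRoot a ↔
      a ^ 2 - T * a + 1 = 0 := by
    intro a
    rw [aux_root_iff F ω σ τ a hω, hστ, hT]
    constructor <;> intro h <;> linear_combination h
  constructor
  · rintro ⟨a, b, hab, ha, hb⟩
    rw [hroot] at ha hb
    have hsum : T = a + b := by
      have h0 : (a - b) * (a + b - T) = 0 := by linear_combination ha - hb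
      rcases mul_eq_zero.mp h0 with h | h
      · exact absurd (sub_eq_zero.mp h) hab
      · linear_combination -h
    have hprod : a * b = 1 := by linear_combination -ha - a * hsum
    have hD : T ^ 2 - 4 = (a - b) ^ 2 := by
      linear_combination (T + a + b) * hsum + 4 * hprod
    refine ⟨(a - b) * ω / τ, ?_, ?_⟩
    · exact div_ne_zero (mul_ne_zero (sub_ne_zero.mpr hab) hω) hτ
    · rw [div_pow, mul_pow, ← hD, hT]
      field_simp
      ring
  · rintro ⟨c, hc, hcsq⟩
    obtain ⟨e, he⟩ : ∃ e : F, e = c * τ / ω := ⟨_, rfl⟩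
    have he0 : e ≠ 0 := he ▸ div_ne_zero (mul_ne_zero hc hτ) hω
    have hesq : e ^ 2 = T ^ 2 - 4 := by
      rw [he, hT, div_pow, mul_pow, ← hcsq]
      field_simp
      ring
    refine ⟨(T + e) / 2, (T - e) / 2, ?_, ?_, ?_⟩
    · intro h
      apply he0
      field_simp at h
      linear_combination h / 2 - e * (mul_inv_cancel₀ h2)
    · rw [hroot]
      field_simp
      linear_combination hesq
    · rw [hroot]
      field_simp
      linear_combination hesq
end

section
/- Let f ∈ GF(q)[x] be a polynomial of degree 8 with no repeated roots in the algebraic closure of GF(q), q odd, such that f(x) is a square in GF(q) for every x ∈ GF(q). Then q ≤ 64. -/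
open Polynomial

private theorem keyId1 {R : Type*} [CommRing R]
    (f V h1 h2 h3 h4 h5 h6 h7 h8 D1 D2 D3 Z R4 R5 R6 R7 G : R)
    (hD1 : D1 = 4*f*h2 - h1^2)
    (hD2 : D2 = 16*f^2*h3 - 2*h1*D1)
    (hD3 : D3 = 64*f^3*h4 - D1^2 - 2*h1*D2)
    (hZ : Z = 64*h1*f^3 + 16*V*D1*f^2 + 4*V^2*D2*f + V^3*D3)
    (hG : G = h1 + h2*V + h3*V^2 + h4*V^3 + h5*V^4 + h6*V^5 + h7*V^6 + h8*V^7)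
    (hR4 : R4 = 128*(h1*D3 + D1*D2)*f^3 - 16384*f^7*h5)
    (hR5 : R5 = (32*D1*D3 + 16*D2^2)*f^2 - 16384*f^7*h6)
    (hR6 : R6 = 8*D2*D3*f - 16384*f^7*h7)
    (hR7 : R7 = D3^2 - 16384*f^7*h8) :
    V*Z^2 + 256*f^4*Z - 16384*f^7*G = V^4*(R4 + V*R5 + V^2*R6 + V^3*R7) := by
  subst hD1 hD2 hD3 hZ hG hR4 hR5 hR6 hR7
  ring

private theorem ndle_mul {R : Type*} [Semiring R] {p q : R[X]} {a b n : ℕ}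
    (hp : p.natDegree ≤ a) (hq : q.natDegree ≤ b) (h : a + b ≤ n) :
    (p*q).natDegree ≤ n :=
  natDegree_mul_le.trans ((Nat.add_le_add hp hq).trans h)

private theorem ndle_sub {R : Type*} [Ring R] {p q : R[X]} {n : ℕ}
    (hp : p.natDegree ≤ n) (hq : q.natDegree ≤ n) :
    (p - q).natDegree ≤ n :=
  (natDegree_sub_le p q).trans (max_le hp hq)

private theorem ndle_add {R : Type*} [Semiring R] {p q : R[X]} {n : ℕ}
    (hp : p.natDegree ≤ n) (hq : q.natDegree ≤ n) :
    (p + q).natDegree ≤ n :=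
  (natDegree_add_le p q).trans (max_le hp hq)

private theorem ndle_pow {R : Type*} [Semiring R] {p : R[X]} {a k n : ℕ}
    (hp : p.natDegree ≤ a) (h : k * a ≤ n) : (p^k).natDegree ≤ n :=
  natDegree_pow_le.trans ((Nat.mul_le_mul_left k hp).trans h)

/-- (Consequence of the Weil bound.) If `f ∈ GF(q)[x]`, `q` odd, has degree `8`, has no repeated
roots in the algebraic closure, and `f(x)` is a square in `GF(q)` for every `x ∈ GF(q)`,
then `q ≤ 64`. -/
theorem stmt_12 (q : ℕ) (hq : Odd q)
    (F : Type) [Field F] [Fintype F] (hF : Fintype.card F = q)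
    (f : F[X]) (hdeg : f.natDegree = 8)
    (hsep : (f.map (algebraMap F (AlgebraicClosure F))).roots.Nodup)
    (hsq : ∀ x : F, ∃ c : F, f.eval x = c ^ 2) :
    q ≤ 64 := by
  classical
  by_contra hq64
  push_neg at hq64
  have hq1 : 1 < q := by omega
  -- characteristic is odd
  have hp2 : (2 : F) ≠ 0 := by
    intro h2
    obtain ⟨p, hp⟩ := CharP.exists F
    obtain ⟨n, hprime, hcard⟩ := FiniteField.card F p
    have hpd : (p : ℕ) ∣ 2 := by
      have := (CharP.cast_eq_zero_iff F p 2).mp (by exact_mod_cast h2)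
      exact_mod_cast this
    have hp2' : p = 2 := ((Nat.prime_dvd_prime_iff_eq hprime Nat.prime_two).mp hpd)
    rw [hp2', hF] at hcard
    have : Even q := by
      rw [hcard]
      exact (Nat.even_pow' (by exact_mod_cast n.pos.ne')).mpr even_two
    exact (Nat.not_even_iff_odd.mpr hq) this
  have hpowcard : ∀ c : F, c ^ q = c := by
    intro c
    rw [← hF]
    exact FiniteField.pow_card c
  have hf0 : f ≠ 0 := fun h => by simp [h] at hdeg
  -- f is squarefree
  have hsepf : f.Separable := by
    apply (nodup_aroots_iff_of_splits hf0
      (IsAlgClosed.splits (f.map (algebraMap F (AlgebraicClosure F))))).mp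
    rw [aroots_def]
    exact hsep
  have hsqf : Squarefree f := hsepf.squarefree
  -- the vanishing polynomial V
  obtain ⟨V, hVdef⟩ : ∃ V : F[X], V = X ^ q - X := ⟨_, rfl⟩
  have hdegV : V.natDegree = q := by
    rw [hVdef]; exact FiniteField.X_pow_card_sub_X_natDegree_eq F hq1
  have hV0 : V ≠ 0 := by
    rw [hVdef]; exact FiniteField.X_pow_card_sub_X_ne_zero F hq1
  have hMonicV : V.Monic := by
    rw [hVdef]
    apply monic_X_pow_sub
    rw [degree_X]
    exact_mod_cast hq1
  have hVprod : V = ∏ a : F, (X - C a) := by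
    have hVcard : V = X ^ Fintype.card F - X := by rw [hVdef, hF]
    have hcardroots : Multiset.card V.roots = V.natDegree := by
      rw [hVcard, FiniteField.roots_X_pow_card_sub_X, ← hVcard, hdegV]
      rw [← hF]
      simp [Finset.card_univ]
    have h := prod_multiset_X_sub_C_of_monic_of_roots_card_eq hMonicV hcardroots
    rw [hVcard, FiniteField.roots_X_pow_card_sub_X, ← hVcard] at h
    rw [← h, Finset.prod_eq_multiset_prod]
  -- s and the polynomial W with f^s - f = V * W
  obtain ⟨t, ht⟩ := hq
  obtain ⟨s, hsdef⟩ : ∃ s : ℕ, s = (q+1)/2 := ⟨_, rfl⟩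
  have hs2 : 2 * s = q + 1 := by omega
  have hdvdW : V ∣ f ^ s - f := by
    rw [hVprod]
    apply Finset.prod_dvd_of_coprime
    · exact fun a _ b _ hab => Polynomial.pairwise_coprime_X_sub_C Function.injective_id hab
    · intro a _
      rw [dvd_iff_isRoot]
      obtain ⟨c, hc⟩ := hsq a
      have hcs : (c ^ 2) ^ s = c ^ 2 := by
        rw [← pow_mul, hs2, pow_succ, hpowcard, ← pow_two]
      simp only [IsRoot.def, eval_sub, eval_pow, hc, hcs, sub_self]
  obtain ⟨W, hWeq⟩ := hdvdW
  -- Taylor expansion: f.comp (V + X) = ∑ hasseDeriv j f * V^j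
  have hHD : ∀ j, hasseDeriv j (f.map (C : F →+* F[X])) = (hasseDeriv j f).map (C : F →+* F[X]) := by
    intro j
    ext n
    simp [hasseDeriv_coeff, coeff_map]
  have hmapdeg : (f.map (C : F →+* F[X])).natDegree = 8 := by
    rw [natDegree_map_eq_of_injective C_injective, hdeg]
  have htaylor : f.comp (V + X) = ∑ j ∈ Finset.range 9, hasseDeriv j f * V ^ j := by
    have h1 : eval V (taylor (X : F[X]) (f.map (C : F →+* F[X]))) = f.comp (V + X) := by
      rw [taylor_apply, eval_comp]
      simp only [eval_add, eval_X, eval_C]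
      rw [eval_map]
      rfl
    have h2 : eval V (taylor (X : F[X]) (f.map (C : F →+* F[X])))
        = ∑ j ∈ Finset.range 9, hasseDeriv j f * V ^ j := by
      rw [eval_eq_sum_range' (n := 9) (by rw [natDegree_taylor, hmapdeg]; omega)]
      apply Finset.sum_congr rfl
      intro j _
      rw [taylor_coeff, hHD, eval_map, eval₂_C_X]
    rw [← h1, h2]
  have hfq : f ^ q = f.comp (V + X) := by
    have h : f ^ Fintype.card F = f.comp (X ^ Fintype.card F) := by
      rw [← FiniteField.expand_card f, expand_eq_comp_X_pow]
    rw [hF] at h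
    have hX : (V + X : F[X]) = X ^ q := by rw [hVdef]; ring
    rw [hX]
    exact h
  -- names for the Hasse derivatives
  obtain ⟨H1, hH1def⟩ : ∃ p : F[X], p = hasseDeriv 1 f := ⟨_, rfl⟩
  obtain ⟨H2, hH2def⟩ : ∃ p : F[X], p = hasseDeriv 2 f := ⟨_, rfl⟩
  obtain ⟨H3, hH3def⟩ : ∃ p : F[X], p = hasseDeriv 3 f := ⟨_, rfl⟩
  obtain ⟨H4, hH4def⟩ : ∃ p : F[X], p = hasseDeriv 4 f := ⟨_, rfl⟩
  obtain ⟨H5, hH5def⟩ : ∃ p : F[X], p = hasseDeriv 5 f := ⟨_, rfl⟩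
  obtain ⟨H6, hH6def⟩ : ∃ p : F[X], p = hasseDeriv 6 f := ⟨_, rfl⟩
  obtain ⟨H7, hH7def⟩ : ∃ p : F[X], p = hasseDeriv 7 f := ⟨_, rfl⟩
  obtain ⟨H8, hH8def⟩ : ∃ p : F[X], p = hasseDeriv 8 f := ⟨_, rfl⟩
  have hexp : f ^ q = f + (H1*V + H2*V^2 + H3*V^3 + H4*V^4 + H5*V^5 + H6*V^6
      + H7*V^7 + H8*V^8) := by
    rw [hH1def, hH2def, hH3def, hH4def, hH5def, hH6def, hH7def, hH8def, hfq, htaylor]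
    simp only [Finset.sum_range_succ, Finset.sum_range_zero, hasseDeriv_zero', pow_zero,
      zero_add, mul_one, pow_one]
    ring
  obtain ⟨G, hGdef⟩ : ∃ p : F[X],
      p = H1 + H2*V + H3*V^2 + H4*V^3 + H5*V^4 + H6*V^5 + H7*V^6 + H8*V^7 := ⟨_, rfl⟩
  have hVG : V * G = f ^ q - f := by
    rw [hGdef]
    linear_combination -hexp
  -- the fundamental quadratic identity
  have hpow : f ^ s * f ^ s = f ^ q * f := by
    rw [← pow_add, ← pow_succ]
    congr 1
    omega
  have hVK : V * (V*W^2 + 2*f*W - f*G) = 0 := by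
    calc V * (V*W^2 + 2*f*W - f*G) = (V*W)^2 + 2*f*(V*W) - f*(V*G) := by ring
    _ = (f^s - f)^2 + 2*f*(f^s - f) - f*(f^q - f) := by rw [← hWeq, hVG]
    _ = f^s * f^s - f^q * f := by ring
    _ = 0 := by rw [hpow]; ring
  have hK : V*W^2 + 2*f*W - f*G = 0 := by
    rcases mul_eq_zero.mp hVK with h | h
    · exact absurd h hV0
    · exact h
  -- the digit polynomials
  obtain ⟨D1, hD1def⟩ : ∃ p : F[X], p = 4*f*H2 - H1^2 := ⟨_, rfl⟩
  obtain ⟨D2, hD2def⟩ : ∃ p : F[X], p = 16*f^2*H3 - 2*H1*D1 := ⟨_, rfl⟩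
  obtain ⟨D3, hD3def⟩ : ∃ p : F[X], p = 64*f^3*H4 - D1^2 - 2*H1*D2 := ⟨_, rfl⟩
  obtain ⟨Z, hZdef⟩ : ∃ p : F[X], p = 64*H1*f^3 + 16*V*D1*f^2 + 4*V^2*D2*f + V^3*D3 := ⟨_, rfl⟩
  obtain ⟨R4, hR4def⟩ : ∃ p : F[X], p = 128*(H1*D3 + D1*D2)*f^3 - 16384*f^7*H5 := ⟨_, rfl⟩
  obtain ⟨R5, hR5def⟩ : ∃ p : F[X], p = (32*D1*D3 + 16*D2^2)*f^2 - 16384*f^7*H6 := ⟨_, rfl⟩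
  obtain ⟨R6, hR6def⟩ : ∃ p : F[X], p = 8*D2*D3*f - 16384*f^7*H7 := ⟨_, rfl⟩
  obtain ⟨R7, hR7def⟩ : ∃ p : F[X], p = D3^2 - 16384*f^7*H8 := ⟨_, rfl⟩
  obtain ⟨SR, hSRdef⟩ : ∃ p : F[X], p = R4 + V*R5 + V^2*R6 + V^3*R7 := ⟨_, rfl⟩
  have hI3 : V*Z^2 + 256*f^4*Z - 16384*f^7*G = V^4*SR := by
    rw [hSRdef]
    exact keyId1 f V H1 H2 H3 H4 H5 H6 H7 H8 D1 D2 D3 Z R4 R5 R6 R7 G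
      hD1def hD2def hD3def hZdef hGdef hR4def hR5def hR6def hR7def
  have hI4 : (128*f^3*W - Z) * (V*(128*f^3*W + Z) + 256*f^4) = -(V^4*SR) := by
    linear_combination 16384*f^6*hK - hI3
  obtain ⟨e, hedef⟩ : ∃ p : F[X], p = 128*f^3*W - Z := ⟨_, rfl⟩
  -- degree bounds
  have hf8 : f.natDegree ≤ 8 := le_of_eq hdeg
  have hVq : V.natDegree ≤ q := le_of_eq hdegV
  have hHb : ∀ j, (hasseDeriv j f).natDegree ≤ 8 - j := fun j =>
    (natDegree_hasseDeriv_le f j).trans (by rw [hdeg])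
  have hH1b : H1.natDegree ≤ 7 := by rw [hH1def]; exact hHb 1
  have hH2b : H2.natDegree ≤ 6 := by rw [hH2def]; exact hHb 2
  have hH3b : H3.natDegree ≤ 5 := by rw [hH3def]; exact hHb 3
  have hH4b : H4.natDegree ≤ 4 := by rw [hH4def]; exact hHb 4
  have hH5b : H5.natDegree ≤ 3 := by rw [hH5def]; exact hHb 5
  have hH6b : H6.natDegree ≤ 2 := by rw [hH6def]; exact hHb 6
  have hH7b : H7.natDegree ≤ 1 := by rw [hH7def]; exact hHb 7
  have hH8b : H8.natDegree ≤ 0 := by rw [hH8def]; exact hHb 8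
  have h4n : (4 : F[X]).natDegree ≤ 0 := (natDegree_ofNat 4).le
  have h2n : (2 : F[X]).natDegree ≤ 0 := (natDegree_ofNat 2).le
  have h8n : (8 : F[X]).natDegree ≤ 0 := (natDegree_ofNat 8).le
  have h16n : (16 : F[X]).natDegree ≤ 0 := (natDegree_ofNat 16).le
  have h32n : (32 : F[X]).natDegree ≤ 0 := (natDegree_ofNat 32).le
  have h64n : (64 : F[X]).natDegree ≤ 0 := (natDegree_ofNat 64).le
  have h128n : (128 : F[X]).natDegree ≤ 0 := (natDegree_ofNat 128).le
  have h16384n : (16384 : F[X]).natDegree ≤ 0 := (natDegree_ofNat 16384).le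
  have hfp2 : (f^2).natDegree ≤ 16 := ndle_pow hf8 (by norm_num)
  have hfp3 : (f^3).natDegree ≤ 24 := ndle_pow hf8 (by norm_num)
  have hfp7 : (f^7).natDegree ≤ 56 := ndle_pow hf8 (by norm_num)
  have hD1b : D1.natDegree ≤ 14 := by
    have a1 : ((4:F[X])*f).natDegree ≤ 8 := ndle_mul h4n hf8 (by norm_num)
    have a2 : ((4:F[X])*f*H2).natDegree ≤ 14 := ndle_mul a1 hH2b (by norm_num)
    have a3 : (H1^2).natDegree ≤ 14 := ndle_pow hH1b (by norm_num)
    rw [hD1def]; exact ndle_sub a2 a3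
  have hD2b : D2.natDegree ≤ 21 := by
    have b1 : ((16:F[X])*f^2).natDegree ≤ 16 := ndle_mul h16n hfp2 (by norm_num)
    have b2 : ((16:F[X])*f^2*H3).natDegree ≤ 21 := ndle_mul b1 hH3b (by norm_num)
    have b3 : ((2:F[X])*H1).natDegree ≤ 7 := ndle_mul h2n hH1b (by norm_num)
    have b4 : ((2:F[X])*H1*D1).natDegree ≤ 21 := ndle_mul b3 hD1b (by norm_num)
    rw [hD2def]; exact ndle_sub b2 b4
  have hD3b : D3.natDegree ≤ 28 := by
    have c1 : ((64:F[X])*f^3).natDegree ≤ 24 := ndle_mul h64n hfp3 (by norm_num)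
    have c2 : ((64:F[X])*f^3*H4).natDegree ≤ 28 := ndle_mul c1 hH4b (by norm_num)
    have c3 : (D1^2).natDegree ≤ 28 := ndle_pow hD1b (by norm_num)
    have c4 : ((2:F[X])*H1).natDegree ≤ 7 := ndle_mul h2n hH1b (by norm_num)
    have c5 : ((2:F[X])*H1*D2).natDegree ≤ 28 := ndle_mul c4 hD2b (by norm_num)
    rw [hD3def]; exact ndle_sub (ndle_sub c2 c3) c5
  have hZb : Z.natDegree ≤ 3*q + 28 := by
    have z1 : ((64:F[X])*H1).natDegree ≤ 7 := ndle_mul h64n hH1b (by norm_num)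
    have z2 : ((64:F[X])*H1*f^3).natDegree ≤ 31 := ndle_mul z1 hfp3 (by norm_num)
    have z2' : ((64:F[X])*H1*f^3).natDegree ≤ 3*q + 28 := z2.trans (by omega)
    have z3 : ((16:F[X])*V).natDegree ≤ q := ndle_mul h16n hVq (by omega)
    have z4 : ((16:F[X])*V*D1).natDegree ≤ q+14 := ndle_mul z3 hD1b (by omega)
    have z5 : ((16:F[X])*V*D1*f^2).natDegree ≤ q+30 := ndle_mul z4 hfp2 (by omega)
    have z5' : ((16:F[X])*V*D1*f^2).natDegree ≤ 3*q + 28 := z5.trans (by omega)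
    have z6 : (V^2).natDegree ≤ 2*q := ndle_pow hVq (le_refl _)
    have z7 : ((4:F[X])*V^2).natDegree ≤ 2*q := ndle_mul h4n z6 (by omega)
    have z8 : ((4:F[X])*V^2*D2).natDegree ≤ 2*q+21 := ndle_mul z7 hD2b (by omega)
    have z9 : ((4:F[X])*V^2*D2*f).natDegree ≤ 2*q+29 := ndle_mul z8 hf8 (by omega)
    have z9' : ((4:F[X])*V^2*D2*f).natDegree ≤ 3*q + 28 := z9.trans (by omega)
    have z10 : (V^3).natDegree ≤ 3*q := ndle_pow hVq (le_refl _)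
    have z11 : (V^3*D3).natDegree ≤ 3*q+28 := ndle_mul z10 hD3b (by omega)
    rw [hZdef]; exact ndle_add (ndle_add (ndle_add z2' z5') z9') z11
  have hWb : W.natDegree ≤ 3*q + 4 := by
    by_cases hW0 : W = 0
    · simp [hW0]
    · have h1 : (V*W).natDegree = q + W.natDegree := by
        rw [natDegree_mul hV0 hW0, hdegV]
      have h2 : (f^s - f).natDegree ≤ 4*q + 4 :=
        ndle_sub (ndle_pow hf8 (by omega)) (hf8.trans (by omega))
      rw [← hWeq] at h1
      omega
  have heb : e.natDegree ≤ 3*q + 28 := by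
    have w1 : ((128:F[X])*f^3).natDegree ≤ 24 := ndle_mul h128n hfp3 (by norm_num)
    have w2 : ((128:F[X])*f^3*W).natDegree ≤ 3*q+28 := ndle_mul w1 hWb (by omega)
    rw [hedef]; exact ndle_sub w2 hZb
  -- the key case split
  by_cases he0 : e = 0
  · -- e = 0 : extract the digit identities, contradict squarefreeness
    have hSR0 : SR = 0 := by
      have h : V^4 * SR = 0 := by
        have h' := hI4
        rw [← hedef, he0, zero_mul] at h'
        have h'' := h'.symm
        rwa [neg_eq_zero] at h''
      rcases mul_eq_zero.mp h with h' | h'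
      · exact absurd h' (pow_ne_zero 4 hV0)
      · exact h'
    have hR4b : R4.natDegree ≤ 59 := by
      have r1 : (H1*D3).natDegree ≤ 35 := ndle_mul hH1b hD3b (by norm_num)
      have r2 : (D1*D2).natDegree ≤ 35 := ndle_mul hD1b hD2b (by norm_num)
      have r3 : (H1*D3 + D1*D2).natDegree ≤ 35 := ndle_add r1 r2
      have r4 : ((128:F[X])*(H1*D3 + D1*D2)).natDegree ≤ 35 := ndle_mul h128n r3 (by norm_num)
      have r5 : ((128:F[X])*(H1*D3 + D1*D2)*f^3).natDegree ≤ 59 := ndle_mul r4 hfp3 (by norm_num)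
      have r6 : ((16384:F[X])*f^7).natDegree ≤ 56 := ndle_mul h16384n hfp7 (by norm_num)
      have r7 : ((16384:F[X])*f^7*H5).natDegree ≤ 59 := ndle_mul r6 hH5b (by norm_num)
      rw [hR4def]; exact ndle_sub r5 r7
    have hR40 : R4 = 0 := by
      have hdvd : V ∣ R4 := ⟨-(R5 + V*R6 + V^2*R7), by linear_combination hSR0 - hSRdef⟩
      exact eq_zero_of_dvd_of_natDegree_lt hdvd (by omega)
    have hrest1 : R5 + V*R6 + V^2*R7 = 0 := by
      have h : V * (R5 + V*R6 + V^2*R7) = 0 := by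
        linear_combination hSR0 - hSRdef - hR40
      rcases mul_eq_zero.mp h with h' | h'
      · exact absurd h' hV0
      · exact h'
    have hR5b : R5.natDegree ≤ 59 := by
      have s1 : ((32:F[X])*D1).natDegree ≤ 14 := ndle_mul h32n hD1b (by norm_num)
      have s2 : ((32:F[X])*D1*D3).natDegree ≤ 42 := ndle_mul s1 hD3b (by norm_num)
      have s3 : (D2^2).natDegree ≤ 42 := ndle_pow hD2b (by norm_num)
      have s4 : ((16:F[X])*D2^2).natDegree ≤ 42 := ndle_mul h16n s3 (by norm_num)
      have s5 : ((32:F[X])*D1*D3 + 16*D2^2).natDegree ≤ 42 := ndle_add s2 s4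
      have s6 : (((32:F[X])*D1*D3 + 16*D2^2)*f^2).natDegree ≤ 59 := ndle_mul s5 hfp2 (by norm_num)
      have s7 : ((16384:F[X])*f^7).natDegree ≤ 56 := ndle_mul h16384n hfp7 (by norm_num)
      have s8 : ((16384:F[X])*f^7*H6).natDegree ≤ 59 := ndle_mul s7 hH6b (by norm_num)
      rw [hR5def]; exact ndle_sub s6 s8
    have hR50 : R5 = 0 := by
      have hdvd : V ∣ R5 := ⟨-(R6 + V*R7), by linear_combination hrest1⟩
      exact eq_zero_of_dvd_of_natDegree_lt hdvd (by omega)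
    have hrest2 : R6 + V*R7 = 0 := by
      have h : V * (R6 + V*R7) = 0 := by linear_combination hrest1 - hR50
      rcases mul_eq_zero.mp h with h' | h'
      · exact absurd h' hV0
      · exact h'
    have hR6b : R6.natDegree ≤ 59 := by
      have u1 : ((8:F[X])*D2).natDegree ≤ 21 := ndle_mul h8n hD2b (by norm_num)
      have u2 : ((8:F[X])*D2*D3).natDegree ≤ 49 := ndle_mul u1 hD3b (by norm_num)
      have u3 : ((8:F[X])*D2*D3*f).natDegree ≤ 59 := ndle_mul u2 hf8 (by norm_num)
      have u4 : ((16384:F[X])*f^7).natDegree ≤ 56 := ndle_mul h16384n hfp7 (by norm_num)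
      have u5 : ((16384:F[X])*f^7*H7).natDegree ≤ 59 := ndle_mul u4 hH7b (by norm_num)
      rw [hR6def]; exact ndle_sub u3 u5
    have hR60 : R6 = 0 := by
      have hdvd : V ∣ R6 := ⟨-R7, by linear_combination hrest2⟩
      exact eq_zero_of_dvd_of_natDegree_lt hdvd (by omega)
    have hR70 : R7 = 0 := by
      have h : V * R7 = 0 := by linear_combination hrest2 - hR60
      rcases mul_eq_zero.mp h with h' | h'
      · exact absurd h' hV0
      · exact h'
    -- now D3^2 = 16384 * f^7 * H8 with H8 a nonzero constant
    have hD3sq : D3^2 = 16384*f^7*H8 := by linear_combination hR70 - hR7def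
    have hc8 : f.coeff 8 ≠ 0 := by
      have h := leadingCoeff_ne_zero.mpr hf0
      rwa [leadingCoeff, hdeg] at h
    have hH8C : H8 = C (f.coeff 8) := by
      have h1 : H8 = C (H8.coeff 0) := eq_C_of_natDegree_le_zero hH8b
      have h2 : H8.coeff 0 = f.coeff 8 := by
        rw [hH8def, hasseDeriv_coeff]
        simp
      rw [h1, h2]
    -- peel off four factors of f
    have hd1 : f ∣ D3 := by
      refine (hsqf.dvd_pow_iff_dvd two_ne_zero).mp ⟨16384*f^6*H8, ?_⟩
      linear_combination hD3sq
    obtain ⟨t1, ht1⟩ := hd1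
    have e1 : t1^2 = 16384*f^5*H8 := by
      have h : f^2 * t1^2 = f^2 * (16384*f^5*H8) := by
        linear_combination hD3sq - (f*t1 + D3)*ht1
      exact mul_left_cancel₀ (pow_ne_zero 2 hf0) h
    have hd2 : f ∣ t1 := by
      refine (hsqf.dvd_pow_iff_dvd two_ne_zero).mp ⟨16384*f^4*H8, ?_⟩
      linear_combination e1
    obtain ⟨t2, ht2⟩ := hd2
    have e2 : t2^2 = 16384*f^3*H8 := by
      have h : f^2 * t2^2 = f^2 * (16384*f^3*H8) := by
        linear_combination e1 - (f*t2 + t1)*ht2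
      exact mul_left_cancel₀ (pow_ne_zero 2 hf0) h
    have hd3 : f ∣ t2 := by
      refine (hsqf.dvd_pow_iff_dvd two_ne_zero).mp ⟨16384*f^2*H8, ?_⟩
      linear_combination e2
    obtain ⟨t3, ht3⟩ := hd3
    have e3 : t3^2 = 16384*f*H8 := by
      have h : f^2 * t3^2 = f^2 * (16384*f*H8) := by
        linear_combination e2 - (f*t3 + t2)*ht3
      exact mul_left_cancel₀ (pow_ne_zero 2 hf0) h
    have hd4 : f ∣ t3 := by
      refine (hsqf.dvd_pow_iff_dvd two_ne_zero).mp ⟨16384*H8, ?_⟩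
      linear_combination e3
    obtain ⟨t4, ht4⟩ := hd4
    have e4 : f * t4^2 = 16384*H8 := by
      have h : f * (f * t4^2) = f * (16384*H8) := by
        linear_combination e3 - (f*t4 + t3)*ht4
      exact mul_left_cancel₀ hf0 h
    have hdvdunit : f ∣ (16384*H8 : F[X]) := ⟨t4^2, e4.symm⟩
    have hunit : IsUnit (16384*H8 : F[X]) := by
      have hval : (16384*H8 : F[X]) = C ((16384 : F) * f.coeff 8) := by
        rw [hH8C, ← map_ofNat (C : F →+* F[X]) 16384, ← C_mul]
      rw [hval]
      refine isUnit_C.mpr (isUnit_iff_ne_zero.mpr (mul_ne_zero ?_ hc8))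
      have h2 : (16384 : F) = 2^14 := by norm_num
      rw [h2]
      exact pow_ne_zero _ hp2
    have hu : IsUnit f := isUnit_of_dvd_unit hdvdunit hunit
    have := natDegree_eq_zero_of_isUnit hu
    omega
  · -- e ≠ 0 : too many roots with multiplicity 4
    have hdvd4 : ∀ a ∈ Finset.univ.filter (fun a : F => f.eval a ≠ 0), ((X - C a)^4 : F[X]) ∣ e := by
      intro a ha
      have hfa : f.eval a ≠ 0 := by simpa using ha
      have hXV : (X - C a : F[X]) ∣ V := by
        rw [hVprod]
        exact Finset.dvd_prod_of_mem _ (Finset.mem_univ a)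
      have hdvdprod : ((X - C a)^4 : F[X]) ∣ e * (V*(128*f^3*W + Z) + 256*f^4) := by
        rw [hedef, hI4]
        exact dvd_neg.mpr ((pow_dvd_pow_of_dvd hXV 4).mul_right SR)
      have hcop : IsCoprime ((X - C a)^4 : F[X]) (V*(128*f^3*W + Z) + 256*f^4) := by
        refine IsCoprime.pow_left ?_
        rw [(irreducible_X_sub_C a).coprime_iff_not_dvd, dvd_iff_isRoot]
        intro hroot
        rw [IsRoot.def] at hroot
        have hVa : V.eval a = 0 := by
          rw [hVdef]
          simp [hpowcard a]
        rw [eval_add, eval_mul, hVa, zero_mul, zero_add, eval_mul, eval_pow] at hroot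
        have h256 : (256 : F) ≠ 0 := by
          have h2 : (256 : F) = 2^8 := by norm_num
          rw [h2]
          exact pow_ne_zero _ hp2
        have h256e : ((256 : F[X]).eval a) = (256 : F) := by simp
        rw [h256e] at hroot
        exact (mul_ne_zero h256 (pow_ne_zero 4 hfa)) hroot
      exact hcop.dvd_of_dvd_mul_right hdvdprod
    have hpair : (↑(Finset.univ.filter (fun a : F => f.eval a ≠ 0)) : Set F).Pairwise
        (Function.onFun IsCoprime fun a : F => ((X - C a)^4 : F[X])) := by
      intro a _ b _ hab
      exact (Polynomial.pairwise_coprime_X_sub_C Function.injective_id hab).pow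
    have hproddvd : (∏ a ∈ Finset.univ.filter (fun a : F => f.eval a ≠ 0),
        ((X - C a)^4 : F[X])) ∣ e :=
      Finset.prod_dvd_of_coprime hpair hdvd4
    have hprodndeg : (∏ a ∈ Finset.univ.filter (fun a : F => f.eval a ≠ 0),
        ((X - C a)^4 : F[X])).natDegree = 4 * (Finset.univ.filter (fun a : F => f.eval a ≠ 0)).card := by
      rw [natDegree_prod _ _ (fun a _ => pow_ne_zero 4 (X_sub_C_ne_zero a))]
      rw [Finset.sum_congr rfl (fun a _ => by rw [natDegree_pow, natDegree_X_sub_C])]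
      simp [mul_comm]
    have hdegle : 4 * (Finset.univ.filter (fun a : F => f.eval a ≠ 0)).card ≤ e.natDegree := by
      rw [← hprodndeg]
      exact natDegree_le_of_dvd hproddvd he0
    have hcard0 : (Finset.univ.filter (fun a : F => f.eval a = 0)).card ≤ 8 := by
      have hsub : (Finset.univ.filter (fun a : F => f.eval a = 0)) ⊆ f.roots.toFinset := by
        intro a ha
        rw [Multiset.mem_toFinset, mem_roots hf0]
        exact (Finset.mem_filter.mp ha).2
      calc (Finset.univ.filter (fun a : F => f.eval a = 0)).card
          ≤ f.roots.toFinset.card := Finset.card_le_card hsub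
        _ ≤ Multiset.card f.roots := f.roots.toFinset_card_le
        _ ≤ f.natDegree := f.card_roots'
        _ = 8 := hdeg
    have hge : q - 8 ≤ (Finset.univ.filter (fun a : F => f.eval a ≠ 0)).card := by
      have hsubset : Finset.univ \ (Finset.univ.filter fun a : F => f.eval a = 0)
          ⊆ Finset.univ.filter (fun a : F => f.eval a ≠ 0) := by
        intro a ha
        simp only [Finset.mem_sdiff, Finset.mem_filter, Finset.mem_univ, true_and] at ha ⊢
        exact ha
      have h1 := Finset.card_le_card hsubset
      rw [Finset.card_sdiff_of_subset (Finset.filter_subset _ _), Finset.card_univ, hF] at h1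
      omega
    omega
end
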